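/- arXiv:0809.4099 — 10 statements merged into one kernel-verified Lean document; each statement's English description precedes it below -/
import Mathlib

section
/- Let X be a median algebra and let m be the median of x, y, z. If v ∈ [y,z], then m ∈ [x,v]. -/
structure MedianAlgebra (X : Type*) where
  interval : X → X → Set X
  ma1 : ∀ x, interval x x = {x}
  ma2 : ∀ x y, interval x y = interval y x
  ma3 : ∀ x y z, z ∈ interval x y → interval x z ⊆ interval x y
  ma4 : ∀ x y z, ∃! m, m ∈ interval x y ∧ m ∈ interval y z ∧ m ∈ interval z x

/-- If `m` is the median of `x, y, z` and `v ∈ [y,z]`, then `m ∈ [x,v]`. -/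
theorem stmt1 {X : Type*} (M : MedianAlgebra X) (x y z m v : X)
    (hm : m ∈ M.interval x y ∧ m ∈ M.interval y z ∧ m ∈ M.interval z x)
    (hv : v ∈ M.interval y z) :
    m ∈ M.interval x v := by
  obtain ⟨n, ⟨hn1, hn2, hn3⟩, -⟩ := M.ma4 x y v
  obtain ⟨q, ⟨hq1, hq2, hq3⟩, -⟩ := M.ma4 z n x
  -- n ∈ [y,z] since n ∈ [y,v] ⊆ [y,z]
  have hnyz : n ∈ M.interval y z := M.ma3 y z v hv hn2
  -- q ∈ [y,z] since q ∈ [z,n] ⊆ [z,y]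
  have hqyz : q ∈ M.interval y z := by
    rw [M.ma2]
    exact M.ma3 z y n (by rw [M.ma2]; exact hnyz) hq1
  -- q ∈ [x,n]
  have hqxn : q ∈ M.interval x n := by rw [M.ma2]; exact hq2
  -- q ∈ [x,y] since n ∈ [x,y]
  have hqxy : q ∈ M.interval x y := M.ma3 x y n hn1 hqxn
  -- q ∈ [x,v] since n ∈ [x,v]
  have hqxv : q ∈ M.interval x v :=
    M.ma3 x v n (by rw [M.ma2]; exact hn3) hqxn
  -- q ∈ [z,x]
  have hqzx : q ∈ M.interval z x := by rw [M.ma2]; exact hq3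
  -- q is a median of x, y, z, so q = m by uniqueness
  obtain ⟨w, -, hwu⟩ := M.ma4 x y z
  have hqm : q = m := by
    rw [hwu q ⟨hqxy, hqyz, hqzx⟩, hwu m hm]
  rw [← hqm]
  exact hqxv
end

section
/- In a median algebra, the median closure of a finite subset is finite. -/
/-- The median of three points. -/
noncomputable def MedianAlgebra.med {X : Type*} (M : MedianAlgebra X) (x y z : X) : X :=
  (M.ma4 x y z).choose

/-- The median closure of a subset: the smallest subset containing it that is
stable under taking medians of triples. -/
def MedianAlgebra.medClosure {X : Type*} (M : MedianAlgebra X) (A : Set X) : Set X :=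
  ⋂₀ {B | A ⊆ B ∧ ∀ x ∈ B, ∀ y ∈ B, ∀ z ∈ B, M.med x y z ∈ B}

namespace MedianAlgebra

variable {X : Type*} (M : MedianAlgebra X)

lemma med_spec (x y z : X) :
    M.med x y z ∈ M.interval x y ∧ M.med x y z ∈ M.interval y z ∧
      M.med x y z ∈ M.interval z x :=
  (M.ma4 x y z).choose_spec.1

lemma med_mem₁ (x y z : X) : M.med x y z ∈ M.interval x y := (M.med_spec x y z).1
lemma med_mem₂ (x y z : X) : M.med x y z ∈ M.interval y z := (M.med_spec x y z).2.1
lemma med_mem₃ (x y z : X) : M.med x y z ∈ M.interval z x := (M.med_spec x y z).2.2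

lemma med_unique {x y z m : X} (h1 : m ∈ M.interval x y) (h2 : m ∈ M.interval y z)
    (h3 : m ∈ M.interval z x) : m = M.med x y z :=
  (M.ma4 x y z).unique ⟨h1, h2, h3⟩ ⟨M.med_mem₁ x y z, M.med_mem₂ x y z, M.med_mem₃ x y z⟩

lemma comm {x y u : X} (h : u ∈ M.interval x y) : u ∈ M.interval y x := by
  rwa [M.ma2]

lemma self_mem_left (x y : X) : x ∈ M.interval x y := by
  have h := M.med_mem₁ x x y
  rw [M.ma1] at h
  have h2 := M.med_mem₂ x x y
  rwa [h] at h2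

lemma self_mem_right (x y : X) : y ∈ M.interval x y := M.comm (M.self_mem_left y x)

lemma med_swap₁₂ (x y z : X) : M.med x y z = M.med y x z :=
  M.med_unique (M.comm (M.med_mem₁ x y z)) (M.comm (M.med_mem₃ x y z))
    (M.comm (M.med_mem₂ x y z))

lemma med_swap₂₃ (x y z : X) : M.med x y z = M.med x z y :=
  M.med_unique (M.comm (M.med_mem₃ x y z)) (M.comm (M.med_mem₂ x y z))
    (M.comm (M.med_mem₁ x y z))

lemma med_rot (x y z : X) : M.med x y z = M.med y z x := by
  rw [M.med_swap₁₂, M.med_swap₂₃]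

lemma med_of_btw {x y z : X} (h : z ∈ M.interval x y) : M.med x y z = z :=
  (M.med_unique h (M.self_mem_left z y |> fun h' => M.comm h') (M.self_mem_left z x)).symm

lemma med_self_left (x y : X) : M.med x x y = x := by
  have := M.med_of_btw (M.self_mem_left x y)
  rw [M.med_swap₂₃]
  exact this

/-- MA3 as a transitivity rule. -/
lemma btw_trans {x y z w : X} (h : z ∈ M.interval x y) (h' : w ∈ M.interval x z) :
    w ∈ M.interval x y := M.ma3 x y z h h'

/-- Rule R1: if u ∈ [x,y] and y ∈ [x,v] then y ∈ [u,v]. -/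
lemma btw_shift {x y u v : X} (hu : u ∈ M.interval x y) (hy : y ∈ M.interval x v) :
    y ∈ M.interval u v := by
  set w := M.med u y v with hw
  have w1 : w ∈ M.interval u y := M.med_mem₁ u y v
  have w2 : w ∈ M.interval y v := M.med_mem₂ u y v
  have w3 : w ∈ M.interval v u := M.med_mem₃ u y v
  have wxy : w ∈ M.interval x y := M.comm (M.btw_trans (M.comm hu) (M.comm w1))
  have wvx : w ∈ M.interval v x := M.btw_trans (M.comm hy) (M.comm w2)
  have hwmed : w = M.med x y v := M.med_unique wxy w2 wvx
  have hymed : y = M.med x y v :=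
    M.med_unique (M.self_mem_right x y) (M.self_mem_left y v) (M.comm hy)
  have : y = w := hymed.trans hwmed.symm
  rw [this]
  exact M.comm w3

/-- glb lemma: if c ∈ [a,x] and c ∈ [a,y] then c ∈ [a, med a x y]. -/
lemma mem_interval_med {a x y c : X} (hx : c ∈ M.interval a x) (hy : c ∈ M.interval a y) :
    c ∈ M.interval a (M.med a x y) := by
  set u := M.med c x y with hu
  have u1 : u ∈ M.interval c x := M.med_mem₁ c x y
  have u2 : u ∈ M.interval x y := M.med_mem₂ c x y
  have u3 : u ∈ M.interval y c := M.med_mem₃ c x y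
  have uxa : u ∈ M.interval x a := M.btw_trans (M.comm hx) (M.comm u1)
  have uya : u ∈ M.interval y a := M.btw_trans (M.comm hy) u3
  have humed : u = M.med a x y := M.med_unique (M.comm uxa) u2 uya
  -- now u ∈ [c,x] i.e. med a x y ∈ [x,c]; and c ∈ [x,a]; apply R1
  have h1 : M.med a x y ∈ M.interval x c := by rw [← humed]; exact M.comm u1
  have h2 : c ∈ M.interval x a := M.comm hx
  exact M.comm (M.btw_shift h1 h2)

lemma btw_antisymm {a u v : X} (h1 : u ∈ M.interval a v) (h2 : v ∈ M.interval a u) : u = v := by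
  have hu : u = M.med a u v :=
    M.med_unique (M.self_mem_right a u) (M.self_mem_left u v) (M.comm h1)
  have hv : v = M.med a u v :=
    M.med_unique h2 (M.self_mem_right u v) (M.self_mem_left v a)
  exact hu.trans hv.symm

/-- Convexity of intervals. -/
lemma interval_convex {z w p q r : X} (hp : p ∈ M.interval z w) (hq : q ∈ M.interval z w)
    (hr : r ∈ M.interval p q) : r ∈ M.interval z w := by
  set s := M.med z w r with hs
  have s1 : s ∈ M.interval z w := M.med_mem₁ z w r
  have s2 : s ∈ M.interval w r := M.med_mem₂ z w r
  have s3 : s ∈ M.interval r z := M.med_mem₃ z w r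
  -- auxiliary : for any point e with e ∈ [r, ·] relations as med p r w
  have key : ∀ e : X, e ∈ M.interval z w → s ∈ M.interval r (M.med e r w) := by
    intro e he
    set g := M.med e r w with hg
    have g1 : g ∈ M.interval e r := M.med_mem₁ e r w
    have g2 : g ∈ M.interval r w := M.med_mem₂ e r w
    have g3 : g ∈ M.interval w e := M.med_mem₃ e r w
    set u := M.med r z g with hU
    have U1 : u ∈ M.interval r z := M.med_mem₁ r z g
    have U2 : u ∈ M.interval z g := M.med_mem₂ r z g
    have U3 : u ∈ M.interval g r := M.med_mem₃ r z g
    -- u ∈ [z,w]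
    have gwz : g ∈ M.interval w z := M.btw_trans (M.comm he) g3
    have uzw : u ∈ M.interval z w := M.btw_trans (M.comm gwz) U2
    -- u ∈ [w,r]
    have urw : u ∈ M.interval r w := M.btw_trans g2 (M.comm U3)
    -- uniqueness : u = med z w r = s
    have humed : u = M.med z w r := M.med_unique uzw (M.comm urw) U1
    have : s ∈ M.interval r g := by rw [hs, ← humed]; exact M.comm U3
    exact this
  have srg : s ∈ M.interval r (M.med p r w) := key p hp
  have srh : s ∈ M.interval r (M.med q r w) := key q hq
  have srp : s ∈ M.interval r p :=
    M.btw_trans (M.comm (M.med_mem₁ p r w)) srg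
  have srq : s ∈ M.interval r q :=
    M.btw_trans (M.comm (M.med_mem₁ q r w)) srh
  have : s ∈ M.interval r (M.med r p q) := M.mem_interval_med srp srq
  have hmr : M.med r p q = r := by
    rw [M.med_rot]
    exact M.med_of_btw hr
  rw [hmr, M.ma1] at this
  rw [Set.mem_singleton_iff] at this
  rw [← this]
  exact s1

/-- Gate property: for p ∈ [z,w], med r z w ∈ [r,p]. -/
lemma gate {z w p : X} (r : X) (hp : p ∈ M.interval z w) :
    M.med r z w ∈ M.interval r p := by
  set s := M.med r z w with hs
  have s1 : s ∈ M.interval r z := M.med_mem₁ r z w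
  have s2 : s ∈ M.interval z w := M.med_mem₂ r z w
  have s3 : s ∈ M.interval w r := M.med_mem₃ r z w
  set t := M.med r p s with ht
  have t1 : t ∈ M.interval r p := M.med_mem₁ r p s
  have t2 : t ∈ M.interval p s := M.med_mem₂ r p s
  have t3 : t ∈ M.interval s r := M.med_mem₃ r p s
  have trz : t ∈ M.interval r z := M.btw_trans s1 (M.comm t3)
  have trw : t ∈ M.interval r w := M.btw_trans (M.comm s3) (M.comm t3)
  have tzw : t ∈ M.interval z w := M.interval_convex hp s2 t2
  have : t = M.med r z w := M.med_unique trz tzw (M.comm trw)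
  rw [hs, ← this]
  exact t1

/-- Monotonicity: if c ∈ [a,x] then med c v w ∈ [a, med x v w]. -/
lemma med_mono {a x c : X} (v w : X) (hc : c ∈ M.interval a x) :
    M.med c v w ∈ M.interval a (M.med x v w) := by
  set p := M.med c v w with hp
  set P := M.med x v w with hP
  have p2 : p ∈ M.interval v w := M.med_mem₂ c v w
  have P2 : P ∈ M.interval v w := M.med_mem₂ x v w
  have hcp : p ∈ M.interval c P := M.gate c P2
  have hPx : P ∈ M.interval x p := M.gate x p2
  set k := M.med a p P with hk
  have k1 : k ∈ M.interval a p := M.med_mem₁ a p P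
  have k2 : k ∈ M.interval p P := M.med_mem₂ a p P
  have k3 : k ∈ M.interval P a := M.med_mem₃ a p P
  have kpx : k ∈ M.interval p x := M.btw_trans (M.comm hPx) k2
  have kps : k ∈ M.interval p (M.med p a x) := M.mem_interval_med (M.comm k1) kpx
  have hs'pc : M.med p a x ∈ M.interval p c := M.gate p hc
  have kpc : k ∈ M.interval p c := M.btw_trans hs'pc kps
  have kPc : k ∈ M.interval P c := M.btw_trans (M.comm hcp) (M.comm k2)
  have hkmed : k = M.med c p P := M.med_unique (M.comm kpc) k2 kPc
  have hpmed : p = M.med c p P :=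
    M.med_unique (M.self_mem_right c p) (M.self_mem_left p P) (M.comm hcp)
  have : p = k := hpmed.trans hkmed.symm
  rw [this]
  exact M.comm k3

/-- Betweenness is preserved by medians. -/
lemma med_btw_mono {x y u : X} (v w : X) (hu : u ∈ M.interval x y) :
    M.med u v w ∈ M.interval (M.med x v w) (M.med y v w) := by
  have h1 : M.med u v w ∈ M.interval x (M.med y v w) := M.med_mono v w hu
  have h2 : M.med x v w ∈ M.interval x (M.med u v w) := M.gate x (M.med_mem₂ u v w)
  exact M.btw_shift h2 h1

/-- Distributivity of the median over the basepoint meet. -/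
lemma med_dist (a x y v w : X) :
    M.med (M.med a x y) v w = M.med a (M.med x v w) (M.med y v w) := by
  set g := M.med a x y with hg
  have Wap : M.med g v w ∈ M.interval a (M.med x v w) :=
    M.med_mono v w (M.med_mem₁ a x y)
  have Waq : M.med g v w ∈ M.interval a (M.med y v w) :=
    M.med_mono v w (M.comm (M.med_mem₃ a x y))
  have Wpq : M.med g v w ∈ M.interval (M.med x v w) (M.med y v w) :=
    M.med_btw_mono v w (M.med_mem₂ a x y)
  exact M.med_unique Wap Wpq (M.comm Waq)

/-- The semilattice structure with basepoint `a`. -/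
noncomputable def semil (a : X) : SemilatticeInf X where
  le x y := x ∈ M.interval a y
  le_refl x := M.self_mem_right a x
  le_trans x y z hxy hyz := M.btw_trans hyz hxy
  le_antisymm x y h1 h2 := M.btw_antisymm h1 h2
  inf x y := M.med a x y
  inf_le_left x y := M.med_mem₁ a x y
  inf_le_right x y := M.comm (M.med_mem₃ a x y)
  le_inf x y z h1 h2 := M.mem_interval_med h1 h2

lemma subset_medClosure (A : Set X) : A ⊆ M.medClosure A := by
  intro x hx B hB
  exact hB.1 hx

lemma medClosure_closed (A : Set X) :
    ∀ x ∈ M.medClosure A, ∀ y ∈ M.medClosure A, ∀ z ∈ M.medClosure A,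
      M.med x y z ∈ M.medClosure A := by
  intro x hx y hy z hz B hB
  exact hB.2 x (hx B hB) y (hy B hB) z (hz B hB)

lemma medClosure_min {A B : Set X} (hAB : A ⊆ B)
    (hB : ∀ x ∈ B, ∀ y ∈ B, ∀ z ∈ B, M.med x y z ∈ B) : M.medClosure A ⊆ B :=
  fun _ hx => hx B ⟨hAB, hB⟩

end MedianAlgebra

/-- In a median algebra, the median closure of a finite subset is finite. -/
theorem stmt2 {X : Type*} (M : MedianAlgebra X) (A : Set X) (hA : A.Finite) :
    (M.medClosure A).Finite := by
  classical
  induction A, hA using Set.Finite.induction_on with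
  | empty =>
    have : M.medClosure ∅ ⊆ (∅ : Set X) :=
      M.medClosure_min (subset_refl _) (by intro x hx; exact absurd hx (Set.notMem_empty x))
    exact Set.Finite.subset (Set.finite_empty) this
  | @insert a A ha hAfin hB =>
    set B := M.medClosure A with hBdef
    letI : SemilatticeInf X := M.semil a
    have hinf : ∀ x y : X, x ⊓ y = M.med a x y := fun _ _ => rfl
    set t : Finset X := insert a hB.toFinset with htdef
    -- the candidate superset
    set C : Set X := {x | ∃ s : Finset X, ∃ hs : s.Nonempty, ↑s ⊆ (↑t : Set X) ∧
      x = s.inf' hs id} with hCdef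
    have hCfin : C.Finite := by
      have : C ⊆ (fun s : Finset X => if h : s.Nonempty then s.inf' h id else a) ''
          ↑t.powerset := by
        rintro x ⟨s, hs, hsub, rfl⟩
        refine ⟨s, ?_, by simp [hs]⟩
        simp only [Finset.coe_powerset, Set.mem_preimage, Set.mem_powerset_iff]
        exact hsub
      exact Set.Finite.subset (Set.Finite.image _ (t.powerset.finite_toSet)) this
    -- membership lemmas
    have hmem_single : ∀ u ∈ t, u ∈ C := by
      intro u hu
      exact ⟨{u}, Finset.singleton_nonempty u, by simpa using hu, by simp⟩
    have haC : a ∈ C := hmem_single a (by simp [htdef])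
    have hBC : B ⊆ C := by
      intro b hb
      exact hmem_single b (by simp [htdef, Set.Finite.mem_toFinset, hb])
    have hCmeda : ∀ x ∈ C, ∀ y ∈ C, M.med a x y ∈ C := by
      rintro x ⟨s₁, hs₁, hsub₁, rfl⟩ y ⟨s₂, hs₂, hsub₂, rfl⟩
      refine ⟨s₁ ∪ s₂, hs₁.mono Finset.subset_union_left, ?_, ?_⟩
      · push_cast
        exact Set.union_subset hsub₁ hsub₂
      · rw [Finset.inf'_union hs₁ hs₂, hinf]
    -- B is med-closed
    have hBclosed := M.medClosure_closed A
    -- main: C is med-closed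
    have hCmed : ∀ x ∈ C, ∀ y ∈ C, ∀ z ∈ C, M.med x y z ∈ C := by
      -- first, the case of generators
      have base : ∀ u ∈ t, ∀ v ∈ t, ∀ w ∈ t, M.med u v w ∈ C := by
        intro u hu v hv w hw
        have huC : u ∈ C := hmem_single u hu
        have hvC : v ∈ C := hmem_single v hv
        have hwC : w ∈ C := hmem_single w hw
        have hu' : u = a ∨ u ∈ B := by
          simpa [htdef, Set.Finite.mem_toFinset] using hu
        have hv' : v = a ∨ v ∈ B := by
          simpa [htdef, Set.Finite.mem_toFinset] using hv
        have hw' : w = a ∨ w ∈ B := by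
          simpa [htdef, Set.Finite.mem_toFinset] using hw
        rcases hu' with hua | hub
        · rw [hua]
          exact hCmeda v hvC w hwC
        rcases hv' with hva | hvb
        · rw [M.med_swap₁₂, hva]
          exact hCmeda u huC w hwC
        rcases hw' with hwa | hwb
        · rw [← M.med_rot, hwa]
          exact hCmeda u huC v hvC
        · exact hBC (hBclosed u hub v hvb w hwb)
      -- strong induction on total cardinality
      have main : ∀ n : ℕ, ∀ s₁ s₂ s₃ : Finset X, ∀ h₁ : s₁.Nonempty, ∀ h₂ : s₂.Nonempty,
          ∀ h₃ : s₃.Nonempty, ↑s₁ ⊆ (↑t : Set X) → ↑s₂ ⊆ (↑t : Set X) → ↑s₃ ⊆ (↑t : Set X) →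
          s₁.card + s₂.card + s₃.card ≤ n →
          M.med (s₁.inf' h₁ id) (s₂.inf' h₂ id) (s₃.inf' h₃ id) ∈ C := by
        intro n
        induction n with
        | zero => intro s₁ _ _ h₁ _ _ _ _ _ hcard; exact absurd hcard (by
            have := Finset.card_pos.mpr h₁; omega)
        | succ n ih =>
          intro s₁ s₂ s₃ h₁ h₂ h₃ hsub₁ hsub₂ hsub₃ hcard
          -- helper to split a finset of card ≥ 2
          by_cases hc₁ : 2 ≤ s₁.card
          · obtain ⟨u, hu⟩ : ∃ u, u ∈ s₁ := id h₁
            have hs' : (s₁.erase u).Nonempty := by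
              rw [← Finset.card_pos, Finset.card_erase_of_mem hu]; omega
            have hins : s₁ = insert u (s₁.erase u) := (Finset.insert_erase hu).symm
            have hinf₁ : s₁.inf' h₁ id = M.med a u ((s₁.erase u).inf' hs' id) := by
              rw [← hinf]
              rw [Finset.inf'_congr h₁ hins (fun x _ => rfl)]
              rw [Finset.inf'_insert (H := hs')]
              rfl
            rw [hinf₁, M.med_dist]
            refine hCmeda _ ?_ _ ?_
            · have := ih {u} s₂ s₃ (Finset.singleton_nonempty u) h₂ h₃
                (by simpa using hsub₁ (by exact_mod_cast hu)) hsub₂ hsub₃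
                (by simp only [Finset.card_singleton]
                    have := Finset.card_pos.mpr hs'
                    have hce : (s₁.erase u).card = s₁.card - 1 :=
                      Finset.card_erase_of_mem hu
                    omega)
              simpa using this
            · exact ih (s₁.erase u) s₂ s₃ hs' h₂ h₃
                (Set.Subset.trans (by exact_mod_cast Finset.erase_subset u s₁) hsub₁)
                hsub₂ hsub₃
                (by have hce : (s₁.erase u).card = s₁.card - 1 :=
                      Finset.card_erase_of_mem hu
                    omega)
          by_cases hc₂ : 2 ≤ s₂.card
          · rw [M.med_swap₁₂]
            obtain ⟨u, hu⟩ : ∃ u, u ∈ s₂ := id h₂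
            have hs' : (s₂.erase u).Nonempty := by
              rw [← Finset.card_pos, Finset.card_erase_of_mem hu]; omega
            have hins : s₂ = insert u (s₂.erase u) := (Finset.insert_erase hu).symm
            have hinf₂ : s₂.inf' h₂ id = M.med a u ((s₂.erase u).inf' hs' id) := by
              rw [← hinf]
              rw [Finset.inf'_congr h₂ hins (fun x _ => rfl)]
              rw [Finset.inf'_insert (H := hs')]
              rfl
            rw [hinf₂, M.med_dist]
            refine hCmeda _ ?_ _ ?_
            · have := ih {u} s₁ s₃ (Finset.singleton_nonempty u) h₁ h₃
                (by simpa using hsub₂ (by exact_mod_cast hu)) hsub₁ hsub₃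
                (by simp only [Finset.card_singleton]
                    have := Finset.card_pos.mpr h₁
                    omega)
              simpa using this
            · exact ih (s₂.erase u) s₁ s₃ hs' h₁ h₃
                (Set.Subset.trans (by exact_mod_cast Finset.erase_subset u s₂) hsub₂)
                hsub₁ hsub₃
                (by have hce : (s₂.erase u).card = s₂.card - 1 :=
                      Finset.card_erase_of_mem hu
                    omega)
          by_cases hc₃ : 2 ≤ s₃.card
          · rw [← M.med_rot]
            obtain ⟨u, hu⟩ : ∃ u, u ∈ s₃ := id h₃
            have hs' : (s₃.erase u).Nonempty := by
              rw [← Finset.card_pos, Finset.card_erase_of_mem hu]; omega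
            have hins : s₃ = insert u (s₃.erase u) := (Finset.insert_erase hu).symm
            have hinf₃ : s₃.inf' h₃ id = M.med a u ((s₃.erase u).inf' hs' id) := by
              rw [← hinf]
              rw [Finset.inf'_congr h₃ hins (fun x _ => rfl)]
              rw [Finset.inf'_insert (H := hs')]
              rfl
            rw [hinf₃, M.med_dist]
            refine hCmeda _ ?_ _ ?_
            · have := ih {u} s₁ s₂ (Finset.singleton_nonempty u) h₁ h₂
                (by simpa using hsub₃ (by exact_mod_cast hu)) hsub₁ hsub₂
                (by simp only [Finset.card_singleton]
                    have := Finset.card_pos.mpr h₁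
                    omega)
              simpa using this
            · exact ih (s₃.erase u) s₁ s₂ hs' h₁ h₂
                (Set.Subset.trans (by exact_mod_cast Finset.erase_subset u s₃) hsub₃)
                hsub₁ hsub₂
                (by have hce : (s₃.erase u).card = s₃.card - 1 :=
                      Finset.card_erase_of_mem hu
                    omega)
          -- all singletons
          · have e₁ : s₁.card = 1 := by have := Finset.card_pos.mpr h₁; omega
            have e₂ : s₂.card = 1 := by have := Finset.card_pos.mpr h₂; omega
            have e₃ : s₃.card = 1 := by have := Finset.card_pos.mpr h₃; omega
            obtain ⟨u, rfl⟩ := Finset.card_eq_one.mp e₁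
            obtain ⟨v, rfl⟩ := Finset.card_eq_one.mp e₂
            obtain ⟨w, rfl⟩ := Finset.card_eq_one.mp e₃
            simp only [Finset.inf'_singleton, id]
            exact base u (by simpa using hsub₁ (by simp)) v (by simpa using hsub₂ (by simp))
              w (by simpa using hsub₃ (by simp))
      rintro x ⟨s₁, h₁, hsub₁, rfl⟩ y ⟨s₂, h₂, hsub₂, rfl⟩ z ⟨s₃, h₃, hsub₃, rfl⟩
      exact main (s₁.card + s₂.card + s₃.card) s₁ s₂ s₃ h₁ h₂ h₃ hsub₁ hsub₂ hsub₃ le_rfl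
    -- conclude
    have hsub : M.medClosure (insert a A) ⊆ C := by
      apply M.medClosure_min _ hCmed
      intro x hx
      rcases hx with rfl | hx
      · exact haC
      · exact hBC (M.subset_medClosure A hx)
    exact hCfin.subset hsub
end

section
/- A map f: X → X' between median algebras is a median morphism if and only if f^{-1}(H') is a halfspace of X for every halfspace H' of X'. -/
/-- A subset of a median algebra is convex if it contains the interval between
any two of its points. -/
def MedianAlgebra.IsConvex {X : Type*} (M : MedianAlgebra X) (A : Set X) : Prop :=
  ∀ x ∈ A, ∀ y ∈ A, M.interval x y ⊆ A

/-- A halfspace is a convex set with convex complement. -/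
def MedianAlgebra.IsHalfspace {X : Type*} (M : MedianAlgebra X) (H : Set X) : Prop :=
  M.IsConvex H ∧ M.IsConvex Hᶜ

/-- A median morphism is a map respecting intervals. -/
def IsMedianMorphism {X X' : Type*} (M : MedianAlgebra X) (M' : MedianAlgebra X')
    (f : X → X') : Prop :=
  ∀ x y, f '' M.interval x y ⊆ M'.interval (f x) (f y)

namespace MedAux

variable {X : Type*} (M : MedianAlgebra X)

lemma mem_comm {x y z : X} (h : z ∈ M.interval x y) : z ∈ M.interval y x := by
  rw [M.ma2]; exact h

lemma mem_left (x y : X) : x ∈ M.interval x y := by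
  obtain ⟨m, ⟨h1, h2, _⟩, -⟩ := M.ma4 x x y
  rw [M.ma1] at h1
  have : m = x := h1
  rwa [this] at h2

lemma mem_right (x y : X) : y ∈ M.interval x y :=
  mem_comm M (mem_left M y x)

/-- The exchange lemma: if `z ∈ [x,y]` and `w ∈ [x,z]` then `z ∈ [w,y]`. -/
lemma exch {x y z w : X} (hz : z ∈ M.interval x y) (hw : w ∈ M.interval x z) :
    z ∈ M.interval w y := by
  obtain ⟨m, ⟨h1, h2, h3⟩, -⟩ := M.ma4 w y z
  -- h1 : m ∈ I w y, h2 : m ∈ I y z, h3 : m ∈ I z w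
  have hwxy : w ∈ M.interval x y := M.ma3 x y z hz hw
  have h1' : m ∈ M.interval x y :=
    mem_comm M (M.ma3 y x w (mem_comm M hwxy) (mem_comm M h1))
  have h3' : m ∈ M.interval z x := M.ma3 z x w (mem_comm M hw) h3
  have hm : m = z := (M.ma4 x y z).unique ⟨h1', h2, h3'⟩
    ⟨hz, mem_right M y z, mem_left M z x⟩
  exact hm ▸ h1

/-- One "pushing" step used repeatedly. -/
lemma step {u v w : X} (c : X) (hw : w ∈ M.interval u v) :
    ∃ u', (u' ∈ M.interval c w ∧ u' ∈ M.interval w u ∧ u' ∈ M.interval u c) ∧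
      w ∈ M.interval u' v := by
  obtain ⟨u', ⟨h1, h2, h3⟩, -⟩ := M.ma4 c w u
  exact ⟨u', ⟨h1, h2, h3⟩, exch M hw (mem_comm M h2)⟩

/-- Intervals are convex. -/
lemma conv {a b u v w : X} (hu : u ∈ M.interval a b) (hv : v ∈ M.interval a b)
    (hw : w ∈ M.interval u v) : w ∈ M.interval a b := by
  obtain ⟨u₁, ⟨hu₁aw, hu₁wu, hu₁ua⟩, hw₁⟩ := step M a hw
  obtain ⟨v₁, ⟨hv₁aw, hv₁wv, hv₁va⟩, hw₂⟩ := step M a (mem_comm M hw₁)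
  have hw₃ : w ∈ M.interval u₁ v₁ := mem_comm M hw₂
  have hu₁ab : u₁ ∈ M.interval a b := M.ma3 a b u hu (mem_comm M hu₁ua)
  have hv₁ab : v₁ ∈ M.interval a b := M.ma3 a b v hv (mem_comm M hv₁va)
  obtain ⟨u₂, ⟨hu₂bw, hu₂wu₁, hu₂u₁b⟩, hw₄⟩ := step M b hw₃
  obtain ⟨v₂, ⟨hv₂bw, hv₂wv₁, hv₂v₁b⟩, hw₅⟩ := step M b (mem_comm M hw₄)
  -- hw₅ : w ∈ I v₂ u₂
  have hu₂ab : u₂ ∈ M.interval a b :=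
    mem_comm M (M.ma3 b a u₁ (mem_comm M hu₁ab) (mem_comm M hu₂u₁b))
  have hu₂wa : u₂ ∈ M.interval w a := M.ma3 w a u₁ (mem_comm M hu₁aw) hu₂wu₁
  have hv₂ab : v₂ ∈ M.interval a b :=
    mem_comm M (M.ma3 b a v₁ (mem_comm M hv₁ab) (mem_comm M hv₂v₁b))
  have hv₂wa : v₂ ∈ M.interval w a := M.ma3 w a v₁ (mem_comm M hv₁aw) hv₂wv₁
  have huv : u₂ = v₂ := (M.ma4 a b w).unique ⟨hu₂ab, hu₂bw, hu₂wa⟩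
    ⟨hv₂ab, hv₂bw, hv₂wa⟩
  rw [← huv, M.ma1] at hw₅
  have : w = u₂ := hw₅
  rw [this]
  exact hu₂ab

lemma interval_convex (a b : X) : M.IsConvex (M.interval a b) :=
  fun _ hu _ hv _ hw => conv M hu hv hw

/-- If `r ∈ [x,y]` then the median of `x, y, w` lies in `[w,r]`. -/
lemma lemX {x y w r g : X} (hr : r ∈ M.interval x y) (hg1 : g ∈ M.interval x y)
    (hg2 : g ∈ M.interval y w) (hg3 : g ∈ M.interval w x) : g ∈ M.interval w r := by
  obtain ⟨k, ⟨hk1, hk2, hk3⟩, -⟩ := M.ma4 w r g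
  -- hk1 : k ∈ I w r, hk2 : k ∈ I r g, hk3 : k ∈ I g w
  have hxy : k ∈ M.interval x y := conv M hr hg1 hk2
  have hyw : k ∈ M.interval y w :=
    mem_comm M (M.ma3 w y g (mem_comm M hg2) (mem_comm M hk3))
  have hwx : k ∈ M.interval w x := M.ma3 w x g hg3 (mem_comm M hk3)
  have : k = g := (M.ma4 x y w).unique ⟨hxy, hyw, hwx⟩ ⟨hg1, hg2, hg3⟩
  exact this ▸ hk1

/-- The core separation lemma. -/
lemma sep_core {p q x y r : X} (hx : q ∈ M.interval p x) (hy : q ∈ M.interval p y)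
    (hr : r ∈ M.interval x y) (hp : p ∈ M.interval q r) : p = q := by
  obtain ⟨g, ⟨hg1, hg2, hg3⟩, -⟩ := M.ma4 x y q
  -- hg1 : g ∈ I x y, hg2 : g ∈ I y q, hg3 : g ∈ I q x
  have gxp : g ∈ M.interval x p := M.ma3 x p q (mem_comm M hx) (mem_comm M hg3)
  have gyp : g ∈ M.interval y p := M.ma3 y p q (mem_comm M hy) hg2
  have gpr : g ∈ M.interval p r := lemX M hr hg1 gyp (mem_comm M gxp)
  have gqr : g ∈ M.interval q r := lemX M hr hg1 hg2 hg3
  have hH1 : q ∈ M.interval g p := exch M (mem_comm M hx) (mem_comm M hg3)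
  obtain ⟨μ, ⟨hm1, hm2, hm3⟩, -⟩ := M.ma4 q g p
  -- hm1 : μ ∈ I q g, hm2 : μ ∈ I g p, hm3 : μ ∈ I p q
  have hμp : μ = p := (M.ma4 q p r).unique
    ⟨mem_comm M hm3, M.ma3 p r g gpr (mem_comm M hm2),
      mem_comm M (M.ma3 q r g gqr hm1)⟩
    ⟨mem_right M q p, mem_left M p r, mem_comm M hp⟩
  have hpqg : p ∈ M.interval q g := hμp ▸ hm1
  exact (M.ma4 p q g).unique ⟨mem_left M p q, hpqg, mem_right M g p⟩
    ⟨mem_right M p q, mem_left M q g, hH1⟩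

/-- The join lemma: if `s ∈ [p,c₁]`, `t ∈ [p,c₂]`, `w ∈ [s,t]` and `g` is the
median of `c₁, c₂, w`, then `w ∈ [p,g]`. -/
lemma join {p c₁ c₂ s t w g : X} (hs : s ∈ M.interval p c₁) (ht : t ∈ M.interval p c₂)
    (hw : w ∈ M.interval s t) (hg1 : g ∈ M.interval c₁ c₂) (hg2 : g ∈ M.interval c₂ w)
    (hg3 : g ∈ M.interval w c₁) : w ∈ M.interval p g := by
  -- phase 1
  obtain ⟨s₁, ⟨hs₁pw, hs₁ws, hs₁sp⟩, hw1⟩ := step M p hw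
  have hs₁pc : s₁ ∈ M.interval p c₁ := M.ma3 p c₁ s hs (mem_comm M hs₁sp)
  obtain ⟨s₂, ⟨h1, h2, h3⟩, -⟩ := M.ma4 c₁ w s₁
  have hw2 : w ∈ M.interval s₂ t := exch M hw1 (mem_comm M h2)
  have hs₂pw : s₂ ∈ M.interval p w := mem_comm M (M.ma3 w p s₁ (mem_comm M hs₁pw) h2)
  have hs₂wc : s₂ ∈ M.interval w c₁ := mem_comm M h1
  have hs₂cp : s₂ ∈ M.interval c₁ p := M.ma3 c₁ p s₁ (mem_comm M hs₁pc) (mem_comm M h3)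
  -- phase 2
  obtain ⟨t₁, ⟨ht₁pw, ht₁wt, ht₁tp⟩, hw3⟩ := step M p (mem_comm M hw2)
  have ht₁pc : t₁ ∈ M.interval p c₂ := M.ma3 p c₂ t ht (mem_comm M ht₁tp)
  obtain ⟨t₂, ⟨k1, k2, k3⟩, -⟩ := M.ma4 c₂ w t₁
  have hw4 : w ∈ M.interval t₂ s₂ := exch M hw3 (mem_comm M k2)
  have ht₂pw : t₂ ∈ M.interval p w := mem_comm M (M.ma3 w p t₁ (mem_comm M ht₁pw) k2)
  have ht₂wc : t₂ ∈ M.interval w c₂ := mem_comm M k1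
  have ht₂cp : t₂ ∈ M.interval c₂ p := M.ma3 c₂ p t₁ (mem_comm M ht₁pc) (mem_comm M k3)
  -- phase 3
  have key : ∀ c u : X, u ∈ M.interval p w → u ∈ M.interval w c →
      u ∈ M.interval c p → g ∈ M.interval w c → u ∈ M.interval p g := by
    intro c u h1' h2' h3' hgwc
    obtain ⟨k, ⟨e1, e2, e3⟩, -⟩ := M.ma4 p g u
    -- e1 : k ∈ I p g, e2 : k ∈ I g u, e3 : k ∈ I u p
    have hk : k = u := (M.ma4 p w c).unique
      ⟨M.ma3 p w u h1' (mem_comm M e3), conv M hgwc h2' e2,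
        mem_comm M (M.ma3 p c u (mem_comm M h3') (mem_comm M e3))⟩
      ⟨h1', h2', h3'⟩
    exact hk ▸ e1
  have hs₂pg : s₂ ∈ M.interval p g := key c₁ s₂ hs₂pw hs₂wc hs₂cp hg3
  have ht₂pg : t₂ ∈ M.interval p g := key c₂ t₂ ht₂pw ht₂wc ht₂cp (mem_comm M hg2)
  exact conv M ht₂pg hs₂pg hw4

/-- Halfspace separation of a point from a nonempty convex set. -/
lemma sep {C : Set X} (hC : M.IsConvex C) (hne : C.Nonempty) {d : X} (hd : d ∉ C) :
    ∃ H : Set X, M.IsHalfspace H ∧ C ⊆ H ∧ d ∉ H := by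
  set S : Set (Set X) := {A : Set X | M.IsConvex A ∧ C ⊆ A ∧ d ∉ A} with hS
  have hzorn : ∀ c ⊆ S, IsChain (· ⊆ ·) c → c.Nonempty → ∃ ub ∈ S, ∀ s ∈ c, s ⊆ ub := by
    intro c hcS hchain hcne
    refine ⟨⋃₀ c, ⟨?_, ?_, ?_⟩, fun s hs => Set.subset_sUnion_of_mem hs⟩
    · intro a ha b hb
      obtain ⟨A, hA, haA⟩ := ha
      obtain ⟨B, hB, hbB⟩ := hb
      rcases eq_or_ne A B with rfl | hAB
      · exact fun z hz => ⟨A, hA, (hcS hA).1 a haA b hbB hz⟩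
      · rcases hchain hA hB hAB with h | h
        · exact fun z hz => ⟨B, hB, (hcS hB).1 a (h haA) b hbB hz⟩
        · exact fun z hz => ⟨A, hA, (hcS hA).1 a haA b (h hbB) hz⟩
    · obtain ⟨A, hA⟩ := hcne
      exact (hcS hA).2.1.trans (Set.subset_sUnion_of_mem hA)
    · rintro ⟨A, hA, hdA⟩
      exact (hcS hA).2.2 hdA
  obtain ⟨Mx, hCMx, hmax⟩ := zorn_subset_nonempty S hzorn C ⟨hC, subset_rfl, hd⟩
  obtain ⟨hMxconv, hCMx', hdMx⟩ := hmax.prop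
  refine ⟨Mx, ⟨hMxconv, ?_⟩, hCMx', hdMx⟩
  -- complement of Mx is convex
  intro x' hx' y' hy' z' hz'
  by_contra hz'M
  have hz'Mx : z' ∈ Mx := not_not.mp hz'M
  -- the join of Mx with any point is convex and contains Mx
  have hjoin : ∀ w : X, w ∉ Mx → ∃ m ∈ Mx, d ∈ M.interval w m := by
    intro w hwM
    set J : Set X := {u | ∃ m ∈ Mx, u ∈ M.interval w m} with hJ
    have hJconv : M.IsConvex J := by
      rintro a ⟨m₁, hm₁, ha⟩ b ⟨m₂, hm₂, hb⟩ u hu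
      obtain ⟨g, ⟨hg1, hg2, hg3⟩, -⟩ := M.ma4 m₁ m₂ u
      exact ⟨g, hMxconv m₁ hm₁ m₂ hm₂ hg1, join M ha hb hu hg1 hg2 hg3⟩
    have hMxJ : Mx ⊆ J := fun m hm => ⟨m, hm, mem_right M w m⟩
    by_cases hdJ : d ∈ J
    · exact hdJ
    · have hJS : J ∈ S := ⟨hJconv, hCMx'.trans hMxJ, hdJ⟩
      have : J ⊆ Mx := hmax.2 hJS hMxJ
      obtain ⟨c0, hc0⟩ := hne
      exact absurd (this ⟨c0, hCMx' hc0, mem_left M w c0⟩) hwM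
  obtain ⟨m₁, hm₁, hd₁⟩ := hjoin x' hx'
  obtain ⟨m₂, hm₂, hd₂⟩ := hjoin y' hy'
  -- canonicalize
  obtain ⟨μ₁, ⟨ha1, ha2, ha3⟩, -⟩ := M.ma4 d m₁ z'
  -- ha1 : μ₁ ∈ I d m₁, ha2 : μ₁ ∈ I m₁ z', ha3 : μ₁ ∈ I z' d
  obtain ⟨μ₂, ⟨hb1, hb2, hb3⟩, -⟩ := M.ma4 d m₂ z'
  have hμ₁Mx : μ₁ ∈ Mx := hMxconv m₁ hm₁ z' hz'Mx ha2
  have hμ₂Mx : μ₂ ∈ Mx := hMxconv m₂ hm₂ z' hz'Mx hb2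
  have hdμ₁ : d ∈ M.interval x' μ₁ :=
    mem_comm M (exch M (mem_comm M hd₁) (mem_comm M ha1))
  have hdμ₂ : d ∈ M.interval y' μ₂ :=
    mem_comm M (exch M (mem_comm M hd₂) (mem_comm M hb1))
  obtain ⟨g, ⟨hg1, hg2, hg3⟩, -⟩ := M.ma4 μ₁ μ₂ d
  -- hg1 : g ∈ I μ₁ μ₂, hg2 : g ∈ I μ₂ d, hg3 : g ∈ I d μ₁
  have hgMx : g ∈ Mx := hMxconv μ₁ hμ₁Mx μ₂ hμ₂Mx hg1
  have hgz'd : g ∈ M.interval z' d := conv M ha3 hb3 hg1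
  -- d ∈ I x' g
  have hdx'g : d ∈ M.interval x' g := by
    obtain ⟨k, ⟨e1, e2, e3⟩, -⟩ := M.ma4 x' g d
    -- e1 : k ∈ I x' g, e2 : k ∈ I g d, e3 : k ∈ I d x'
    have hk : k = d := (M.ma4 x' d μ₁).unique
      ⟨mem_comm M e3, M.ma3 d μ₁ g hg3 (mem_comm M e2),
        conv M (mem_comm M hdμ₁) (mem_right M μ₁ x') e3⟩
      ⟨mem_right M x' d, mem_left M d μ₁, mem_comm M hdμ₁⟩
    exact hk ▸ e1
  have hdy'g : d ∈ M.interval y' g := by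
    obtain ⟨k, ⟨e1, e2, e3⟩, -⟩ := M.ma4 y' g d
    have hk : k = d := (M.ma4 y' d μ₂).unique
      ⟨mem_comm M e3, M.ma3 d μ₂ g (mem_comm M hg2) (mem_comm M e2),
        conv M (mem_comm M hdμ₂) (mem_right M μ₂ y') e3⟩
      ⟨mem_right M y' d, mem_left M d μ₂, mem_comm M hdμ₂⟩
    exact hk ▸ e1
  have : g = d := sep_core M (mem_comm M hdx'g) (mem_comm M hdy'g) hz' (mem_comm M hgz'd)
  exact hdMx (this ▸ hgMx)

end MedAux

/-- A map between median algebras is a median morphism if and only if the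
preimage of every halfspace is a halfspace. -/
theorem stmt4 {X X' : Type*} (M : MedianAlgebra X) (M' : MedianAlgebra X') (f : X → X') :
    IsMedianMorphism M M' f ↔
      ∀ H' : Set X', M'.IsHalfspace H' → M.IsHalfspace (f ⁻¹' H') := by
  constructor
  · intro hf H' hH'
    constructor
    · intro a ha b hb c hc
      exact hH'.1 _ ha _ hb (hf a b ⟨c, hc, rfl⟩)
    · intro a ha b hb c hc
      exact hH'.2 _ ha _ hb (hf a b ⟨c, hc, rfl⟩)
  · intro h x y
    rintro _ ⟨z, hz, rfl⟩
    by_contra hfz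
    obtain ⟨H, hH, hCH, hdH⟩ := MedAux.sep M'
      (MedAux.interval_convex M' (f x) (f y))
      ⟨f x, MedAux.mem_left M' (f x) (f y)⟩ hfz
    have hpre := h H hH
    have hx : x ∈ f ⁻¹' H := hCH (MedAux.mem_left M' (f x) (f y))
    have hy : y ∈ f ⁻¹' H := hCH (MedAux.mem_right M' (f x) (f y))
    exact hdH (hpre.1 x hx y hy hz)
end

section
/- In a median metric space, if m is the median of x, y, z, then for every point v: d(v,m) ≤ (d(v,x)+d(v,y)+d(v,z)) − (d(m,x)+d(m,y)+d(m,z)). -/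
def IsMedianSpace (X : Type*) [MetricSpace X] : Prop :=
  ∀ x y z : X, ∃! m : X,
    dist x m + dist m y = dist x y ∧
    dist y m + dist m z = dist y z ∧
    dist z m + dist m x = dist z x

/-- In a median metric space, if `m` is the median of `x, y, z`, then for every `v`:
`d(v,m) ≤ (d(v,x)+d(v,y)+d(v,z)) − (d(m,x)+d(m,y)+d(m,z))`. -/
theorem stmt9 {X : Type*} [MetricSpace X] (hX : IsMedianSpace X) (x y z m : X)
    (hm : dist x m + dist m y = dist x y ∧
          dist y m + dist m z = dist y z ∧
          dist z m + dist m x = dist z x)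
    (v : X) :
    dist v m ≤ (dist v x + dist v y + dist v z) - (dist m x + dist m y + dist m z) := by
  obtain ⟨hm1, hm2, hm3⟩ := hm
  -- p = median of (v, x, y)
  obtain ⟨p, ⟨hp1, hp2, hp3⟩, -⟩ := hX v x y
  -- n = median of (p, z, x)
  obtain ⟨n, ⟨hn1, hn2, hn3⟩, -⟩ := hX p z x
  -- q = median of (n, z, y)
  obtain ⟨q, ⟨hq1, hq2, hq3⟩, -⟩ := hX n z y
  -- uniqueness for the triple (x, y, z)
  obtain ⟨w, -, hwu⟩ := hX x y z
  -- betweenness: n ∈ [x,y] with p ∈ [n,y]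
  have tA1 : dist x y ≤ dist x n + dist n y := dist_triangle x n y
  have tA2 : dist n y ≤ dist n p + dist p y := dist_triangle n p y
  have hA1 : dist x n + dist n y = dist x y := by linarith
  -- q is a median of (x, y, z)
  have tB1 : dist x q ≤ dist x n + dist n q := dist_triangle x n q
  have tB2 : dist x y ≤ dist x q + dist q y := dist_triangle x q y
  have cyq : dist y q = dist q y := dist_comm y q
  have cny : dist n y = dist y n := dist_comm n y
  have cnq : dist n q = dist q n := dist_comm n q
  have hqxy : dist x q + dist q y = dist x y := by linarith
  have czq : dist z q = dist q z := dist_comm z q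
  have czy : dist z y = dist y z := dist_comm z y
  have hqyz : dist y q + dist q z = dist y z := by linarith
  have tC1 : dist q x ≤ dist q n + dist n x := dist_triangle q n x
  have tC2 : dist z x ≤ dist z q + dist q x := dist_triangle z q x
  have cqx : dist q x = dist x q := dist_comm q x
  have cnz : dist n z = dist z n := dist_comm n z
  have hqzx : dist z q + dist q x = dist z x := by linarith
  -- q = m by uniqueness of the median of (x, y, z)
  have hqm : q = m := by
    have h1 := hwu q ⟨hqxy, hqyz, hqzx⟩
    have h2 := hwu m ⟨hm1, hm2, hm3⟩
    rw [h1, h2]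
  subst hqm
  -- q ∈ [p, z]
  have tD1 : dist p q ≤ dist p n + dist n q := dist_triangle p n q
  have tD2 : dist p z ≤ dist p q + dist q z := dist_triangle p q z
  have hpqz : dist p q + dist q z = dist p z := by linarith
  -- final arithmetic
  have tE1 : dist v q ≤ dist v p + dist p q := dist_triangle v p q
  have tE2 : dist p z ≤ dist p v + dist v z := dist_triangle p v z
  have c1 : dist p v = dist v p := dist_comm p v
  have c2 : dist y p = dist p y := dist_comm y p
  have c3 : dist y v = dist v y := dist_comm y v
  have c4 : dist p x = dist x p := dist_comm p x
  have c5 : dist q x = dist x q := dist_comm q x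
  linarith
end

section
/- In a median metric space, the median map is 1-Lipschitz in each variable with respect to the ℓ¹ product metric: if m is the median of x,y,z and m' is the median of x',y',z', then d(m,m') ≤ d(x,x') + d(y,y') + d(z,z'). -/
/-- Betweenness is transitive: if `n ∈ [a,m]` and `m ∈ [a,b]` then `n ∈ [a,b]`. -/
private lemma btw_trans' {X : Type*} [MetricSpace X] {a n m b : X}
    (h1 : dist a n + dist n m = dist a m) (h2 : dist a m + dist m b = dist a b) :
    dist a n + dist n b = dist a b := by
  have t1 := dist_triangle a n b
  have t2 := dist_triangle n m b
  linarith

/-- Gate lemma: if `m` is the median of `(a,b,c)` and `t ∈ [b,c]`, then `m ∈ [a,t]`. -/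
private lemma gate' {X : Type*} [MetricSpace X] (hX : IsMedianSpace X) {a b c m t : X}
    (hm : dist a m + dist m b = dist a b ∧
          dist b m + dist m c = dist b c ∧
          dist c m + dist m a = dist c a)
    (ht : dist b t + dist t c = dist b c) :
    dist a m + dist m t = dist a t := by
  obtain ⟨q1, ⟨hq1, hq2, hq3⟩, -⟩ := hX a b t
  -- q1 ∈ [b,c]
  have hq1bc : dist b q1 + dist q1 c = dist b c := btw_trans' hq2 ht
  obtain ⟨q, ⟨hr1, hr2, hr3⟩, -⟩ := hX a q1 c
  -- q is a median of (a,b,c)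
  have hab : dist a q + dist q b = dist a b := by
    have : dist a q1 + dist q1 b = dist a b := hq1
    exact btw_trans' hr1 this
  have hbc : dist b q + dist q c = dist b c := by
    have h2 : dist c q1 + dist q1 b = dist c b := by
      rw [dist_comm c q1, dist_comm q1 b, dist_comm c b]; linarith [hq1bc]
    have h1 : dist c q + dist q q1 = dist c q1 := by
      rw [dist_comm c q, dist_comm q q1, dist_comm c q1]; linarith [hr2]
    have := btw_trans' h1 h2
    rw [dist_comm c q] at this
    rw [dist_comm b q, dist_comm b c]
    linarith
  have hca : dist c q + dist q a = dist c a := hr3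
  -- uniqueness: q = m
  obtain ⟨n, -, hun⟩ := hX a b c
  have hqn : q = n := hun q ⟨hab, hbc, hca⟩
  have hmn : m = n := hun m ⟨hm.1, hm.2.1, hm.2.2⟩
  have hqm : q = m := by rw [hqn, hmn]
  -- m = q ∈ [a, q1] ⊆ [a, t]
  have hq1at : dist a q1 + dist q1 t = dist a t := by
    rw [dist_comm a q1, dist_comm q1 t, dist_comm a t]; linarith [hq3]
  have := btw_trans' hr1 hq1at
  rwa [hqm] at this

/-- One-variable Lipschitz: medians over `(a,b,c)` and `(a',b,c)` are
`dist a a'`-close. -/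
private lemma lip1' {X : Type*} [MetricSpace X] (hX : IsMedianSpace X)
    {a a' b c m m' : X}
    (hm : dist a m + dist m b = dist a b ∧
          dist b m + dist m c = dist b c ∧
          dist c m + dist m a = dist c a)
    (hm' : dist a' m' + dist m' b = dist a' b ∧
           dist b m' + dist m' c = dist b c ∧
           dist c m' + dist m' a' = dist c a') :
    dist m m' ≤ dist a a' := by
  have h1 : dist a m + dist m m' = dist a m' := gate' hX hm hm'.2.1
  have h2 : dist a' m' + dist m' m = dist a' m := gate' hX hm' hm.2.1
  have t1 := dist_triangle a a' m'
  have t2 := dist_triangle a' a m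
  have c1 := dist_comm m m'
  have c2 := dist_comm a a'
  linarith

/-- In a median metric space, the median map is 1-Lipschitz for the ℓ¹
product metric: `d(m,m') ≤ d(x,x') + d(y,y') + d(z,z')`. -/
theorem stmt10 {X : Type*} [MetricSpace X] (hX : IsMedianSpace X)
    (x y z m x' y' z' m' : X)
    (hm : dist x m + dist m y = dist x y ∧
          dist y m + dist m z = dist y z ∧
          dist z m + dist m x = dist z x)
    (hm' : dist x' m' + dist m' y' = dist x' y' ∧
           dist y' m' + dist m' z' = dist y' z' ∧
           dist z' m' + dist m' x' = dist z' x') :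
    dist m m' ≤ dist x x' + dist y y' + dist z z' := by
  obtain ⟨m1, hm1, -⟩ := hX x' y z
  obtain ⟨m2, hm2, -⟩ := hX x' y' z
  have h1 : dist m m1 ≤ dist x x' :=
    lip1' hX ⟨hm.1, hm.2.1, hm.2.2⟩ ⟨hm1.1, hm1.2.1, hm1.2.2⟩
  have h2 : dist m1 m2 ≤ dist y y' := by
    -- cyclic rotation: view medians over (y, z, x') and (y', z, x')
    exact lip1' hX ⟨hm1.2.1, hm1.2.2, hm1.1⟩ ⟨hm2.2.1, hm2.2.2, hm2.1⟩
  have h3 : dist m2 m' ≤ dist z z' := by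
    -- cyclic rotation twice: view medians over (z, x', y') and (z', x', y')
    exact lip1' hX ⟨hm2.2.2, hm2.1, hm2.2.1⟩ ⟨hm'.2.2, hm'.1, hm'.2.1⟩
  have t1 := dist_triangle m m1 m'
  have t2 := dist_triangle m1 m2 m'
  linarith
end

section
/- The metric completion of a median metric space is a median metric space. -/
namespace MedianAux

variable {X : Type*} [MetricSpace X]

lemma le_of_forall_pos_le_add' {a b : ℝ} (h : ∀ ε : ℝ, 0 < ε → a ≤ b + ε) : a ≤ b := by
  by_contra hc
  push_neg at hc
  have := h ((a - b) / 2) (by linarith)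
  linarith

/-- transitivity of metric betweenness -/
lemma btwn_trans {c u n a : X} (h1 : dist c u + dist u n = dist c n)
    (h2 : dist c n + dist n a = dist c a) : dist c u + dist u a = dist c a := by
  have t1 := dist_triangle u n a
  have t2 := dist_triangle c u a
  linarith

/-- if c ∈ [a,b] and n ∈ [a,c] then c ∈ [n,b] -/
lemma step {a b c n : X} (hacb : dist a c + dist c b = dist a b)
    (hn : dist a n + dist n c = dist a c) : dist n c + dist c b = dist n b := by
  have t1 := dist_triangle a n b
  have t2 := dist_triangle n c b
  linarith

/-- Gate lemma: if a ∈ [x,y] and g is the median of (x,c,y), then g ∈ [a,c]. -/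
lemma gate (hX : IsMedianSpace X) {x y a c g : X}
    (ha : dist x a + dist a y = dist x y)
    (hg1 : dist x g + dist g c = dist x c)
    (hg2 : dist c g + dist g y = dist c y)
    (hg3 : dist y g + dist g x = dist y x) :
    dist a g + dist g c = dist a c := by
  obtain ⟨p, ⟨hp1, hp2, hp3⟩, -⟩ := hX x a c
  obtain ⟨q, ⟨hq1, hq2, hq3⟩, -⟩ := hX y a c
  obtain ⟨P, ⟨hP1, hP2, hP3⟩, -⟩ := hX p q c
  -- p ∈ [x,a], p ∈ [a,c], p ∈ [c,x]; q similarly with y; P median of (p,q,c)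
  have hpay : dist p a + dist a y = dist p y := step ha hp1
  have h' : dist y a + dist a p = dist y p := by
    rw [dist_comm y a, dist_comm a p, dist_comm y p]; linarith [hpay]
  have hqap : dist q a + dist a p = dist q p := step h' hq1
  -- B c P x
  have h1 : dist c P + dist P x = dist c x := btwn_trans hP3 hp3
  -- B c P y
  have hP2' : dist c P + dist P q = dist c q := by
    rw [dist_comm c P, dist_comm P q, dist_comm c q]; linarith [hP2]
  have h2 : dist c P + dist P y = dist c y := btwn_trans hP2' hq3
  -- B x P y
  have h3 : dist x P + dist P y = dist x y := by
    have t1 := dist_triangle x p P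
    have t2 := dist_triangle P q y
    have t3 := dist_triangle x P y
    linarith [hqap, hP1, hp1, hq1, ha, dist_comm p q, dist_comm a p, dist_comm a q,
      dist_comm q y, dist_comm a y]
  -- uniqueness: g = P
  have h1' : dist x P + dist P c = dist x c := by
    rw [dist_comm x P, dist_comm P c, dist_comm x c]; linarith [h1]
  have h3' : dist y P + dist P x = dist y x := by
    rw [dist_comm y P, dist_comm P x, dist_comm y x]; linarith [h3]
  have hgP : g = P := (hX x c y).unique ⟨hg1, hg2, hg3⟩ ⟨h1', h2, h3'⟩
  have hp2' : dist c p + dist p a = dist c a := by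
    rw [dist_comm c p, dist_comm p a, dist_comm c a]; linarith [hp2]
  have hfin : dist c P + dist P a = dist c a := btwn_trans hP3 hp2'
  rw [hgP, dist_comm a P, dist_comm P c, dist_comm a c]; linarith [hfin]

/-- Key stability inequality: any point v is within 3/2 of its total excess from the median. -/
lemma key (hX : IsMedianSpace X) {a b c m : X}
    (hm1 : dist a m + dist m b = dist a b)
    (hm2 : dist b m + dist m c = dist b c)
    (hm3 : dist c m + dist m a = dist c a) (v : X) :
    dist v m ≤ 3/2 * ((dist a v + dist v b - dist a b) + (dist b v + dist v c - dist b c)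
      + (dist c v + dist v a - dist c a)) := by
  obtain ⟨w, ⟨hw1, hw2, hw3⟩, -⟩ := hX b c v
  -- w median of (b,c,v): w ∈ [b,c], [c,v], [v,b]
  have hg1 : dist b m + dist m a = dist b a := by
    rw [dist_comm b m, dist_comm m a, dist_comm b a]; linarith [hm1]
  have hg2 : dist a m + dist m c = dist a c := by
    rw [dist_comm a m, dist_comm m c, dist_comm a c]; linarith [hm3]
  have hg3 : dist c m + dist m b = dist c b := by
    rw [dist_comm c m, dist_comm m b, dist_comm c b]; linarith [hm2]
  have hgate : dist w m + dist m a = dist w a := gate hX hw1 hg1 hg2 hg3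
  have t1 := dist_triangle v w m
  have t2 := dist_triangle a v w
  have t3 := dist_triangle w v b
  have t4 := dist_triangle w v c
  have n2 := dist_triangle c v a
  have n3 := dist_triangle a v b
  linarith [hw1, hw2, hw3, hgate, hm1, hm2, hm3,
    dist_comm a v, dist_comm b v, dist_comm c v, dist_comm a w, dist_comm b w,
    dist_comm c w, dist_comm v w, dist_comm a m, dist_comm b m, dist_comm c m,
    dist_comm a b, dist_comm b c, dist_comm c a, dist_comm w m, dist_comm v m]

end MedianAux

set_option maxHeartbeats 1000000 in
open MedianAux UniformSpace Filter Topology in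
/-- The metric completion of a median metric space is a median metric space. -/
theorem stmt11 {X : Type*} [MetricSpace X] (hX : IsMedianSpace X) :
    IsMedianSpace (UniformSpace.Completion X) := by
  intro x y z
  have dense' : ∀ (t : Completion X) (n : ℕ), ∃ p : X,
      dist t (p : Completion X) < 1 / ((n : ℝ) + 1) := by
    intro t n
    exact Metric.denseRange_iff.mp Completion.denseRange_coe t _ (by positivity)
  choose A hA using fun n => dense' x n
  choose B hB using fun n => dense' y n
  choose C hC using fun n => dense' z n
  choose M hM using fun n => (hX (A n) (B n) (C n)).exists
  -- pairwise bounds on approximating sequences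
  have pairGen : ∀ (t : Completion X) (D : ℕ → X),
      (∀ j, dist t ((D j : Completion X)) < 1 / ((j : ℝ) + 1)) →
      ∀ n k, dist (D n) (D k) ≤ 1 / ((n : ℝ) + 1) + 1 / ((k : ℝ) + 1) := by
    intro t D hD n k
    have h1 : dist ((D n : Completion X)) ((D k : Completion X))
        ≤ dist ((D n : Completion X)) t + dist t ((D k : Completion X)) := dist_triangle _ _ _
    rw [Completion.dist_eq] at h1
    have h2 := hD n
    have h3 := hD k
    have h4 := dist_comm ((D n : Completion X)) t
    linarith
  have pairA := pairGen x A hA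
  have pairB := pairGen y B hB
  have pairC := pairGen z C hC
  -- Cauchy
  have hcs : CauchySeq (fun n : ℕ => ((M n : Completion X))) := by
    rw [Metric.cauchySeq_iff']
    intro ε hε
    obtain ⟨N, hN⟩ := exists_nat_gt (36 / ε)
    refine ⟨N, fun n hn => ?_⟩
    have hmono : 1 / ((n : ℝ) + 1) ≤ 1 / ((N : ℝ) + 1) := by
      apply one_div_le_one_div_of_le (by positivity)
      have : (N : ℝ) ≤ (n : ℝ) := by exact_mod_cast hn
      linarith
    have hXd : dist (M n) (M N) ≤ 36 / ((N : ℝ) + 1) := by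
      have hk := key hX (hM N).1 (hM N).2.1 (hM N).2.2 (M n)
      obtain ⟨hz1, hz2, hz3⟩ := hM n
      have v1 := dist_triangle (A N) (A n) (M n)
      have v2 := dist_triangle (M n) (B n) (B N)
      have v3 := dist_triangle (B N) (B n) (M n)
      have v4 := dist_triangle (M n) (C n) (C N)
      have v5 := dist_triangle (C N) (C n) (M n)
      have v6 := dist_triangle (M n) (A n) (A N)
      have w1 := dist_triangle4 (A n) (A N) (B N) (B n)
      have w2 := dist_triangle4 (B n) (B N) (C N) (C n)
      have w3 := dist_triangle4 (C n) (C N) (A N) (A n)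
      have p1 := pairA N n
      have p2 := pairB N n
      have p3 := pairC N n
      have q1 := pairA n N
      have q2 := pairB n N
      have q3 := pairC n N
      have h36 : 36 / ((N : ℝ) + 1) = 36 * (1 / ((N : ℝ) + 1)) := by ring
      rw [h36]
      linarith [dist_comm (A N) (A n), dist_comm (B N) (B n), dist_comm (C N) (C n),
        dist_comm (A n) (M n), dist_comm (B n) (M n), dist_comm (C n) (M n)]
    have hcast : dist ((M n : Completion X)) ((M N : Completion X)) = dist (M n) (M N) :=
      Completion.dist_eq _ _
    rw [hcast]
    calc dist (M n) (M N) ≤ 36 / ((N : ℝ) + 1) := hXd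
      _ < ε := by
        rw [div_lt_iff₀ (by positivity)]
        have h1 : 36 / ε < (N : ℝ) + 1 := by linarith
        have := (div_lt_iff₀ hε).mp h1
        linarith
  obtain ⟨Mlim, hMlim⟩ := cauchySeq_tendsto_of_complete hcs
  -- convergence of approximating sequences
  have tendGen : ∀ (t : Completion X) (D : ℕ → X),
      (∀ j, dist t ((D j : Completion X)) < 1 / ((j : ℝ) + 1)) →
      Tendsto (fun n : ℕ => ((D n : Completion X))) atTop (𝓝 t) := by
    intro t D hD
    rw [tendsto_iff_dist_tendsto_zero]
    refine squeeze_zero (fun n => dist_nonneg) (fun n => ?_)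
      tendsto_one_div_add_atTop_nhds_zero_nat
    rw [dist_comm]
    exact (hD n).le
  have tA := tendGen x A hA
  have tB := tendGen y B hB
  have tC := tendGen z C hC
  -- median equalities in the limit
  have limeq : ∀ (D E : ℕ → X) (t s : Completion X),
      Tendsto (fun n : ℕ => ((D n : Completion X))) atTop (𝓝 t) →
      Tendsto (fun n : ℕ => ((E n : Completion X))) atTop (𝓝 s) →
      (∀ n, dist (D n) (M n) + dist (M n) (E n) = dist (D n) (E n)) →
      dist t Mlim + dist Mlim s = dist t s := by
    intro D E t s hD hE heq
    have l1 : Tendsto (fun n : ℕ => dist ((D n : Completion X)) ((M n : Completion X))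
        + dist ((M n : Completion X)) ((E n : Completion X))) atTop
        (𝓝 (dist t Mlim + dist Mlim s)) := (hD.dist hMlim).add (hMlim.dist hE)
    have l2 : Tendsto (fun n : ℕ => dist ((D n : Completion X)) ((E n : Completion X)))
        atTop (𝓝 (dist t s)) := hD.dist hE
    have hfe : (fun n : ℕ => dist ((D n : Completion X)) ((M n : Completion X))
        + dist ((M n : Completion X)) ((E n : Completion X)))
        = fun n : ℕ => dist ((D n : Completion X)) ((E n : Completion X)) := by
      funext n
      rw [Completion.dist_eq, Completion.dist_eq, Completion.dist_eq]
      exact heq n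
    rw [hfe] at l1
    exact tendsto_nhds_unique l1 l2
  have e1 : dist x Mlim + dist Mlim y = dist x y :=
    limeq A B x y tA tB (fun n => (hM n).1)
  have e2 : dist y Mlim + dist Mlim z = dist y z :=
    limeq B C y z tB tC (fun n => (hM n).2.1)
  have e3 : dist z Mlim + dist Mlim x = dist z x :=
    limeq C A z x tC tA (fun n => (hM n).2.2)
  -- key inequality transferred to the completion
  have keyY : ∀ (v : Completion X) (n : ℕ),
      dist v ((M n : Completion X)) ≤ 3/2 *
        ((dist ((A n : Completion X)) v + dist v ((B n : Completion X))
            - dist ((A n : Completion X)) ((B n : Completion X)))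
        + (dist ((B n : Completion X)) v + dist v ((C n : Completion X))
            - dist ((B n : Completion X)) ((C n : Completion X)))
        + (dist ((C n : Completion X)) v + dist v ((A n : Completion X))
            - dist ((C n : Completion X)) ((A n : Completion X)))) := by
    intro v n
    apply le_of_forall_pos_le_add'
    intro ε hε
    obtain ⟨p, hp⟩ := Metric.denseRange_iff.mp Completion.denseRange_coe v (ε / 10)
      (by positivity)
    have hk := key hX (hM n).1 (hM n).2.1 (hM n).2.2 p
    have c1 : dist ((p : Completion X)) ((M n : Completion X)) = dist p (M n) :=
      Completion.dist_eq _ _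
    have c2 : dist ((A n : Completion X)) ((p : Completion X)) = dist (A n) p :=
      Completion.dist_eq _ _
    have c3 : dist ((p : Completion X)) ((B n : Completion X)) = dist p (B n) :=
      Completion.dist_eq _ _
    have c4 : dist ((A n : Completion X)) ((B n : Completion X)) = dist (A n) (B n) :=
      Completion.dist_eq _ _
    have c5 : dist ((B n : Completion X)) ((p : Completion X)) = dist (B n) p :=
      Completion.dist_eq _ _
    have c6 : dist ((p : Completion X)) ((C n : Completion X)) = dist p (C n) :=
      Completion.dist_eq _ _
    have c7 : dist ((B n : Completion X)) ((C n : Completion X)) = dist (B n) (C n) :=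
      Completion.dist_eq _ _
    have c8 : dist ((C n : Completion X)) ((p : Completion X)) = dist (C n) p :=
      Completion.dist_eq _ _
    have c9 : dist ((p : Completion X)) ((A n : Completion X)) = dist p (A n) :=
      Completion.dist_eq _ _
    have c10 : dist ((C n : Completion X)) ((A n : Completion X)) = dist (C n) (A n) :=
      Completion.dist_eq _ _
    have t0 := dist_triangle v ((p : Completion X)) ((M n : Completion X))
    have u1 := dist_triangle ((A n : Completion X)) v ((p : Completion X))
    have u2 := dist_triangle ((p : Completion X)) v ((B n : Completion X))
    have u3 := dist_triangle ((B n : Completion X)) v ((p : Completion X))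
    have u4 := dist_triangle ((p : Completion X)) v ((C n : Completion X))
    have u5 := dist_triangle ((C n : Completion X)) v ((p : Completion X))
    have u6 := dist_triangle ((p : Completion X)) v ((A n : Completion X))
    have hc := dist_comm v ((p : Completion X))
    linarith [c1, c2, c3, c4, c5, c6, c7, c8, c9, c10]
  -- conclusion
  refine ⟨Mlim, ⟨e1, e2, e3⟩, ?_⟩
  rintro m' ⟨h1', h2', h3'⟩
  have hb18 : ∀ n : ℕ, dist m' ((M n : Completion X)) ≤ 18 * (1 / ((n : ℝ) + 1)) := by
    intro n
    have hk := keyY m' n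
    have u1 := dist_triangle ((A n : Completion X)) x m'
    have u2 := dist_triangle m' y ((B n : Completion X))
    have u3 := dist_triangle ((B n : Completion X)) y m'
    have u4 := dist_triangle m' z ((C n : Completion X))
    have u5 := dist_triangle ((C n : Completion X)) z m'
    have u6 := dist_triangle m' x ((A n : Completion X))
    have w1 := dist_triangle4 x ((A n : Completion X)) ((B n : Completion X)) y
    have w2 := dist_triangle4 y ((B n : Completion X)) ((C n : Completion X)) z
    have w3 := dist_triangle4 z ((C n : Completion X)) ((A n : Completion X)) x
    have ha' := (hA n).le
    have hb' := (hB n).le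
    have hc' := (hC n).le
    linarith [dist_comm x ((A n : Completion X)), dist_comm y ((B n : Completion X)),
      dist_comm z ((C n : Completion X)), dist_comm m' x, dist_comm m' y, dist_comm m' z,
      dist_comm x y, dist_comm y z, dist_comm z x]
  have hb : ∀ n : ℕ, dist m' Mlim ≤ 18 * (1 / ((n : ℝ) + 1))
      + dist ((M n : Completion X)) Mlim := by
    intro n
    have := dist_triangle m' ((M n : Completion X)) Mlim
    linarith [hb18 n]
  have hlim : Tendsto (fun n : ℕ => 18 * (1 / ((n : ℝ) + 1))
      + dist ((M n : Completion X)) Mlim) atTop (𝓝 0) := by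
    have h0 : Tendsto (fun n : ℕ => 18 * (1 / ((n : ℝ) + 1))) atTop (𝓝 0) := by
      have := tendsto_one_div_add_atTop_nhds_zero_nat.const_mul (18 : ℝ)
      simpa using this
    have h1 : Tendsto (fun n : ℕ => dist ((M n : Completion X)) Mlim) atTop (𝓝 0) :=
      tendsto_iff_dist_tendsto_zero.mp hMlim
    simpa using h0.add h1
  have hfin : dist m' Mlim ≤ 0 := ge_of_tendsto' hlim hb
  exact dist_le_zero.mp hfin
end

section
/- Every median metric space is negative definite: for points x_1,...,x_n and reals α_1,...,α_n with Σα_i = 0, one has Σ_{i,j} α_i α_j d(x_i,x_j) ≤ 0. -/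
set_option linter.unnecessarySeqFocus false

namespace MedianNeg

variable {X : Type*} [MetricSpace X]

/-- `b` lies between `a` and `c`. -/
def Btw (a b c : X) : Prop := dist a b + dist b c = dist a c

lemma btw_symm {a b c : X} (h : Btw a b c) : Btw c b a := by
  unfold Btw at *; rw [dist_comm c b, dist_comm b a, dist_comm c a]; linarith

lemma btw_rfl_left (a b : X) : Btw a a b := by simp [Btw]
lemma btw_rfl_right (a b : X) : Btw a b b := by simp [Btw]

lemma btw_chain₁ {a b c d : X} (h1 : Btw a b d) (h2 : Btw b c d) : Btw a b c := by
  unfold Btw at *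
  have t1 : dist a c ≤ dist a b + dist b c := dist_triangle a b c
  have t2 : dist a d ≤ dist a c + dist c d := dist_triangle a c d
  linarith

lemma btw_chain₂ {a b c d : X} (h1 : Btw a b d) (h2 : Btw b c d) : Btw a c d := by
  unfold Btw at *
  have t1 : dist a c ≤ dist a b + dist b c := dist_triangle a b c
  have t2 : dist a d ≤ dist a c + dist c d := dist_triangle a c d
  linarith

lemma btw_trans {w a b c : X} (h1 : Btw w a b) (h2 : Btw w b c) : Btw w a c := by
  unfold Btw at *
  have t1 : dist a c ≤ dist a b + dist b c := dist_triangle a b c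
  have t2 : dist w c ≤ dist w a + dist a c := dist_triangle w a c
  linarith

lemma btw_antisymm {w a b : X} (h1 : Btw w a b) (h2 : Btw w b a) : a = b := by
  unfold Btw at *
  rw [dist_comm b a] at h2
  have : dist a b ≤ 0 := by linarith
  exact dist_le_zero.mp this

lemma le_dist_sub {w a b : X} (h : Btw w a b) : dist a b = dist w b - dist w a := by
  unfold Btw at h; linarith

lemma dist_w_mono {w a b : X} (h : Btw w a b) : dist w a ≤ dist w b := by
  unfold Btw at h
  have := dist_nonneg (x := a) (y := b); linarith

variable (hX : IsMedianSpace X)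

noncomputable def md (a b c : X) : X := (hX a b c).choose

lemma md_btw₁ (a b c : X) : Btw a (md hX a b c) b := (hX a b c).choose_spec.1.1
lemma md_btw₂ (a b c : X) : Btw b (md hX a b c) c := (hX a b c).choose_spec.1.2.1
lemma md_btw₃ (a b c : X) : Btw c (md hX a b c) a := (hX a b c).choose_spec.1.2.2

lemma md_uniq {a b c m : X} (h1 : Btw a m b) (h2 : Btw b m c) (h3 : Btw c m a) :
    md hX a b c = m := ((hX a b c).choose_spec.2 m ⟨h1, h2, h3⟩).symm

/-- meet of `a`,`b` with respect to basepoint `w`. -/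
noncomputable def iw (w a b : X) : X := md hX w a b

lemma iw_btw (w a b : X) : Btw a (iw hX w a b) b := md_btw₂ hX w a b
lemma iw_le_left (w a b : X) : Btw w (iw hX w a b) a := md_btw₁ hX w a b
lemma iw_le_right (w a b : X) : Btw w (iw hX w a b) b := btw_symm (md_btw₃ hX w a b)

lemma iw_comm (w a b : X) : iw hX w a b = iw hX w b a := by
  refine (md_uniq hX ?_ ?_ ?_).symm
  · exact iw_le_right hX w a b
  · exact btw_symm (iw_btw hX w a b)
  · exact btw_symm (iw_le_left hX w a b)

lemma md_swap12 (a b c : X) : md hX a b c = md hX b a c := by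
  refine (md_uniq hX ?_ ?_ ?_).symm
  · exact btw_symm (md_btw₁ hX a b c)
  · exact btw_symm (md_btw₃ hX a b c)
  · exact btw_symm (md_btw₂ hX a b c)

lemma le_iw {w c a b : X} (h1 : Btw w c a) (h2 : Btw w c b) : Btw w c (iw hX w a b) := by
  set n := md hX c a b with hn
  have p1 : Btw c n a := md_btw₁ hX c a b
  have p2 : Btw a n b := md_btw₂ hX c a b
  have p3 : Btw b n c := md_btw₃ hX c a b
  have q1 : Btw w c n := btw_chain₁ h1 p1
  have q2 : Btw w n a := btw_chain₂ h1 p1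
  have q3 : Btw w n b := btw_chain₂ h2 (btw_symm p3)
  have : iw hX w a b = n := md_uniq hX q2 p2 (btw_symm q3)
  rw [this]; exact q1

lemma iw_self (w a : X) : iw hX w a a = a :=
  md_uniq hX (btw_rfl_right w a) (btw_rfl_left a a) (btw_rfl_left a w)

lemma btw_iw_left {w a b : X} (h : Btw w a b) : iw hX w a b = a :=
  md_uniq hX (btw_rfl_right w a) (btw_rfl_left a b) (btw_symm h)

lemma dist_eq_inf (w a b : X) :
    dist a b = dist w a + dist w b - 2 * dist w (iw hX w a b) := by
  have h1 : Btw a (iw hX w a b) b := iw_btw hX w a b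
  have h2 := le_dist_sub (iw_le_left hX w a b)
  have h3 := le_dist_sub (iw_le_right hX w a b)
  unfold Btw at h1
  rw [dist_comm (iw hX w a b) a] at h2
  linarith

include hX in
lemma btw_of_le_le {w a z b : X} (h1 : Btw w a z) (h2 : Btw w z b) : Btw a z b := by
  set u := md hX a z b with hu
  have p1 : Btw a u z := md_btw₁ hX a z b
  have p2 : Btw z u b := md_btw₂ hX a z b
  have p3 : Btw b u a := md_btw₃ hX a z b
  have q1 : Btw w u z := btw_chain₂ h1 p1
  have t1 : dist w b ≤ dist w u + dist u b := dist_triangle w u b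
  have h0 : dist u z ≤ 0 := by
    unfold Btw at h2 q1 p2
    rw [dist_comm z u] at p2
    linarith
  have huz : u = z := dist_le_zero.mp h0
  have := btw_symm p3
  rw [huz] at this
  exact this


lemma iw_assoc (w a b c : X) :
    iw hX w (iw hX w a b) c = iw hX w a (iw hX w b c) := by
  set l := iw hX w (iw hX w a b) c with hl
  set r := iw hX w a (iw hX w b c) with hr
  have lab : Btw w l (iw hX w a b) := iw_le_left hX w _ c
  have lc : Btw w l c := iw_le_right hX w _ c
  have la : Btw w l a := btw_trans lab (iw_le_left hX w a b)
  have lb : Btw w l b := btw_trans lab (iw_le_right hX w a b)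
  have lbc : Btw w l (iw hX w b c) := le_iw hX lb lc
  have hlr : Btw w l r := le_iw hX la lbc
  have rbc : Btw w r (iw hX w b c) := iw_le_right hX w a _
  have ra : Btw w r a := iw_le_left hX w a _
  have rb : Btw w r b := btw_trans rbc (iw_le_left hX w b c)
  have rc : Btw w r c := btw_trans rbc (iw_le_right hX w b c)
  have hrl : Btw w r l := le_iw hX (le_iw hX ra rb) rc
  exact btw_antisymm hlr hrl

lemma iw_left_comm (w a b c : X) :
    iw hX w a (iw hX w b c) = iw hX w b (iw hX w a c) := by
  rw [← iw_assoc, iw_comm hX w a b, iw_assoc]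

lemma iw_absorb (w a b : X) : iw hX w a (iw hX w a b) = iw hX w a b := by
  rw [← iw_assoc, iw_self]

/-- Gate property: the interval `[w,e]` is gated, with gate `iw w z e`. -/
lemma gate {w e u : X} (hu : Btw w u e) (z : X) :
    dist z u = dist z (iw hX w z e) + dist (iw hX w z e) u := by
  set π := iw hX w z e with hπ
  set a := iw hX w z u with ha
  have hπz : Btw w π z := iw_le_left hX w z e
  have haz : Btw w a z := iw_le_left hX w z u
  have hau : Btw w a u := iw_le_right hX w z u
  have hae : Btw w a e := btw_trans hau hu
  have haπ : Btw w a π := le_iw hX haz hae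
  have h1 : Btw a π z := btw_of_le_le hX haπ hπz
  have hzau : Btw z a u := iw_btw hX w z u
  have haeq : iw hX w π u = a := by
    refine btw_antisymm (w := w) ?_ ?_
    · exact le_iw hX (btw_trans (iw_le_left hX w π u) hπz)
        (iw_le_right hX w π u)
    · exact le_iw hX haπ hau
  have h2 : Btw π a u := by
    have := iw_btw hX w π u
    rw [haeq] at this; exact this
  have e1 : dist z a = dist z π + dist π a := by
    have := btw_symm h1
    unfold Btw at this; linarith
  unfold Btw at hzau h2
  linarith

/-- `p ≤ sup_b p q` and `sup_b p q ≤ b` (w-order), assuming `p ≤ b`. -/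
lemma le_sup {w p b : X} (hp : Btw w p b) (q : X) :
    Btw w p (iw hX b p q) ∧ Btw w (iw hX b p q) b := by
  have h2 : Btw p (iw hX b p q) b := btw_symm (iw_le_left hX b p q)
  exact ⟨btw_chain₁ hp h2, btw_chain₂ hp h2⟩

lemma sup_btw (b p q : X) : Btw p (iw hX b p q) q := iw_btw hX b p q

lemma sup_le {w p q z b : X} (hp : Btw w p z) (hq : Btw w q z) (hz : Btw w z b) :
    Btw w (iw hX b p q) z := by
  set t := iw hX z p q with ht
  have p1 : Btw p t q := sup_btw hX z p q
  have hpt : Btw w p t := (le_sup hX hp q).1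
  have htz : Btw w t z := (le_sup hX hp q).2
  have hqt : Btw w q t := by
    have h := (le_sup hX hq p).1
    rw [iw_comm hX z q p] at h
    rw [ht]; exact h
  have htb : Btw w t b := btw_trans htz hz
  have b1 : Btw p t b := btw_of_le_le hX hpt htb
  have b2 : Btw q t b := btw_of_le_le hX hqt htb
  have : iw hX b p q = t := md_uniq hX (btw_symm b1) p1 b2
  rw [this]; exact htz

/-- modular law: `v(p ∨_b q) = v p + v q - v (p ∧ q)`. -/
lemma v_sup {w p q b : X} (hp : Btw w p b) (hq : Btw w q b) :
    dist w (iw hX b p q) = dist w p + dist w q - dist w (iw hX w p q) := by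
  set s := iw hX b p q with hs
  have h1 : Btw p s q := sup_btw hX b p q
  have hps : Btw w p s := (le_sup hX hp q).1
  have hqs : Btw w q s := by
    rw [iw_comm hX b p q] at hs
    rw [hs]; exact (le_sup hX hq p).1
  have e1 := le_dist_sub hps
  have e2 := le_dist_sub hqs
  have e3 := dist_eq_inf hX w p q
  unfold Btw at h1
  rw [dist_comm s q] at h1
  linarith

lemma join_agree {w p q c b : X} (hp : Btw w p c) (hq : Btw w q c) (hc : Btw w c b) :
    iw hX b p q = iw hX c p q := by
  set t := iw hX c p q with ht
  have p1 : Btw p t q := sup_btw hX c p q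
  have hpt : Btw w p t := (le_sup hX hp q).1
  have htc : Btw w t c := (le_sup hX hp q).2
  have hqt : Btw w q t := by
    rw [iw_comm hX c p q] at ht
    rw [ht]; exact (le_sup hX hq p).1
  have htb : Btw w t b := btw_trans htc hc
  exact md_uniq hX (btw_symm (btw_of_le_le hX hpt htb)) p1 (btw_of_le_le hX hqt htb)

lemma iw_pair_meet (w P Q g : X) :
    iw hX w (iw hX w P g) (iw hX w Q g) = iw hX w (iw hX w P Q) g := by
  rw [iw_assoc]
  rw [iw_left_comm hX w g Q g, iw_self, iw_assoc]

/-- The core "distributivity" identity. -/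
lemma core {w s P Q g : X} (hg : Btw w g s) (hPQ : Btw P s Q) :
    Btw (iw hX w P g) g (iw hX w Q g) := by
  set t := iw hX P g Q with htdef
  set c := iw hX P w Q with hcdef
  have tPQ : Btw P t Q := btw_symm (md_btw₃ hX P g Q)
  have cPQ : Btw P c Q := btw_symm (md_btw₃ hX P w Q)
  -- gate of g onto [P,Q] is t
  have G1 : dist g s = dist g t + dist t s := gate hX hPQ g
  -- t ≤ s in w-order
  have tri1 : dist w t ≤ dist w g + dist g t := dist_triangle w g t
  have tri2 : dist w s ≤ dist w t + dist t s := dist_triangle w t s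
  have hg' : dist w g + dist g s = dist w s := hg
  have E1 : dist w t = dist w g + dist g t := by linarith
  have E2 : Btw w t s := by unfold Btw; linarith
  -- gate of w onto [P,Q] is c
  have E3 : dist w t = dist w c + dist c t := gate hX tPQ w
  -- gate equality for g and c
  have E4 : dist g c = dist g t + dist t c := gate hX cPQ g
  have e5 : dist g t = dist w t - dist w g := by linarith
  have e6 : dist c t = dist w t - dist w c := by linarith
  have e7 : dist t c = dist c t := dist_comm t c
  have e8 := dist_eq_inf hX w g c
  -- med distance relations at t
  have m1 : Btw P t g := md_btw₁ hX P g Q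
  have m2 : Btw g t Q := md_btw₂ hX P g Q
  unfold Btw at m1 m2 tPQ
  have exp1 := dist_eq_inf hX w P g
  have exp2 := dist_eq_inf hX w Q g
  have hQg : dist g Q = dist Q g := dist_comm g Q
  have exp3 := dist_eq_inf hX w P Q
  have hcPQ : c = iw hX w P Q := md_swap12 hX P w Q
  -- (M): v(P⊓g) + v(Q⊓g) = v g + v (g ⊓ c)
  have tg : dist t g = dist g t := dist_comm t g
  have wc' : dist w c = dist w (iw hX w P Q) := by rw [hcPQ]
  have M : dist w (iw hX w P g) + dist w (iw hX w Q g)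
      = dist w g + dist w (iw hX w g c) := by
    linarith
  -- final computation
  have f1 : dist (iw hX w P g) g = dist w g - dist w (iw hX w P g) := by
    have := le_dist_sub (iw_le_right hX w P g)
    rw [dist_comm (iw hX w P g) g] at this ⊢; linarith
  have f2 : dist g (iw hX w Q g) = dist w g - dist w (iw hX w Q g) := by
    have := le_dist_sub (iw_le_right hX w Q g)
    rw [dist_comm (iw hX w Q g) g] at this; linarith
  have f3 := dist_eq_inf hX w (iw hX w P g) (iw hX w Q g)
  have f4 : iw hX w (iw hX w P g) (iw hX w Q g) = iw hX w g c := by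
    rw [iw_pair_meet, ← hcPQ, iw_comm]
  rw [f4] at f3
  unfold Btw
  linarith

/-- Binary distributivity: `(P ∨_b Q) ⊓ m = (P⊓m) ∨_b (Q⊓m)`. -/
lemma binDist {w P Q m b : X} (hP : Btw w P b) (hQ : Btw w Q b) (hm : Btw w m b) :
    iw hX w m (iw hX b P Q) = iw hX b (iw hX w P m) (iw hX w Q m) := by
  set s := iw hX b P Q with hs
  have hsb : Btw w s b := (le_sup hX hP Q).2
  have hPs : Btw w P s := (le_sup hX hP Q).1
  have hQs : Btw w Q s := by
    rw [iw_comm hX b P Q] at hs; rw [hs]; exact (le_sup hX hQ P).1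
  set g := iw hX w m s with hgdef
  have hgs : Btw w g s := iw_le_right hX w m s
  have hgm : Btw w g m := iw_le_left hX w m s
  have hgb : Btw w g b := btw_trans hgs hsb
  have hcore : Btw (iw hX w P g) g (iw hX w Q g) := core hX hgs (sup_btw hX b P Q)
  -- P⊓g = P⊓m
  have ePg : iw hX w P g = iw hX w P m := by
    refine btw_antisymm (w := w) ?_ ?_
    · exact le_iw hX (iw_le_left hX w P g) (btw_trans (iw_le_right hX w P g) hgm)
    · refine le_iw hX (iw_le_left hX w P m) ?_
      refine le_iw hX (iw_le_right hX w P m) ?_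
      exact btw_trans (iw_le_left hX w P m) hPs
  have eQg : iw hX w Q g = iw hX w Q m := by
    refine btw_antisymm (w := w) ?_ ?_
    · exact le_iw hX (iw_le_left hX w Q g) (btw_trans (iw_le_right hX w Q g) hgm)
    · refine le_iw hX (iw_le_left hX w Q m) ?_
      refine le_iw hX (iw_le_right hX w Q m) ?_
      exact btw_trans (iw_le_left hX w Q m) hQs
  set j := iw hX b (iw hX w P m) (iw hX w Q m) with hj
  have hPmb : Btw w (iw hX w P m) b := btw_trans (iw_le_right hX w P m) hm
  have hQmb : Btw w (iw hX w Q m) b := btw_trans (iw_le_right hX w Q m) hm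
  have vj := v_sup hX hPmb hQmb
  -- v g = v j
  have hPmg : Btw w (iw hX w P m) g := by rw [← ePg]; exact iw_le_right hX w P g
  have hQmg : Btw w (iw hX w Q m) g := by rw [← eQg]; exact iw_le_right hX w Q g
  have hjg : Btw w j g := sup_le hX hPmg hQmg hgb
  have meets : iw hX w (iw hX w P m) (iw hX w Q m) = iw hX w (iw hX w P g) (iw hX w Q g) := by
    rw [ePg, eQg]
  have f3 := dist_eq_inf hX w (iw hX w P g) (iw hX w Q g)
  have f1 : dist (iw hX w P g) g = dist w g - dist w (iw hX w P g) := by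
    have := le_dist_sub (iw_le_right hX w P g)
    rw [dist_comm (iw hX w P g) g] at this ⊢; linarith
  have f2 : dist g (iw hX w Q g) = dist w g - dist w (iw hX w Q g) := by
    have := le_dist_sub (iw_le_right hX w Q g)
    rw [dist_comm (iw hX w Q g) g] at this; linarith
  unfold Btw at hcore
  rw [← hj] at vj
  have vgj : dist w g = dist w j := by
    rw [ePg] at f1 f3 hcore
    rw [eQg] at f2 f3 hcore
    linarith
  have djg : dist j g = 0 := by
    have := le_dist_sub hjg
    linarith
  have hfin : j = g := dist_eq_zero.mp djg
  exact hfin.symm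


section Fold

set_option linter.unusedSectionVars false

variable {ι : Type*} [DecidableEq ι]

noncomputable def infOp (w : X) : X → X → X := fun a b => iw hX w a b

def infOpComm (w : X) : Std.Commutative (infOp hX w) := ⟨fun a b => iw_comm hX w a b⟩
def infOpAssoc (w : X) : Std.Associative (infOp hX w) := ⟨fun a b c => iw_assoc hX w a b c⟩

/-- fold of meets of `x i`, `i ∈ U`, together with `b`. -/
noncomputable def MF (w b : X) (x : ι → X) (U : Finset ι) : X :=
  @Finset.fold ι X (infOp hX w) (infOpComm hX w) (infOpAssoc hX w) b x U

@[simp] lemma MF_empty (w b : X) (x : ι → X) : MF hX w b x ∅ = b := rfl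

lemma MF_insert (w b : X) (x : ι → X) {k : ι} {U : Finset ι} (h : k ∉ U) :
    MF hX w b x (insert k U) = iw hX w (x k) (MF hX w b x U) := by
  letI := infOpComm hX w; letI := infOpAssoc hX w
  exact Finset.fold_insert h

lemma MF_base_swap (w : X) (x : ι → X) (U : Finset ι) (b c : X) :
    iw hX w c (MF hX w b x U) = iw hX w b (MF hX w c x U) := by
  induction U using Finset.induction_on with
  | empty => simp only [MF_empty]; exact iw_comm hX w c b
  | @insert k U hk ih =>
      rw [MF_insert hX w b x hk, MF_insert hX w c x hk,
        iw_left_comm hX w c (x k), ih, iw_left_comm hX w b (x k)]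

lemma MF_iw_base (w : X) (x : ι → X) (U : Finset ι) (b c : X) :
    MF hX w (iw hX w b c) x U = iw hX w c (MF hX w b x U) := by
  induction U using Finset.induction_on with
  | empty => simp only [MF_empty]; exact iw_comm hX w b c
  | @insert k U hk ih =>
      rw [MF_insert hX w _ x hk, MF_insert hX w b x hk, ih,
        iw_left_comm hX w (x k) c]

lemma MF_union (w b : X) (x : ι → X) {S U : Finset ι} (h : Disjoint S U) :
    MF hX w (MF hX w b x S) x U = MF hX w b x (S ∪ U) := by
  induction U using Finset.induction_on with
  | empty => simp
  | @insert k U hk ih =>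
      have hdisj : Disjoint S U := by
        refine Finset.disjoint_left.mpr fun a ha hb => ?_
        exact (Finset.disjoint_left.mp h) ha (Finset.mem_insert_of_mem hb)
      have hkS : k ∉ S := fun hks =>
        (Finset.disjoint_left.mp h) hks (Finset.mem_insert_self k U)
      have hkSU : k ∉ S ∪ U := by
        simp only [Finset.mem_union]
        rintro (h1 | h1)
        · exact hkS h1
        · exact hk h1
      rw [MF_insert hX w _ x hk, ih hdisj, Finset.union_insert, MF_insert hX w b x hkSU]

lemma MF_absorb (w c : X) (x : ι → X) (U : Finset ι) :
    iw hX w c (MF hX w c x U) = MF hX w c x U := by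
  induction U using Finset.induction_on with
  | empty => simp only [MF_empty]; exact iw_self hX w c
  | @insert k U hk ih =>
      rw [MF_insert hX w c x hk, iw_left_comm hX w c (x k), ih]

lemma MF_mem_absorb (w b : X) (x : ι → X) {U : Finset ι} {i : ι} (hi : i ∈ U) :
    iw hX w (x i) (MF hX w b x U) = MF hX w b x U := by
  rw [← Finset.insert_erase hi, MF_insert hX w b x (Finset.notMem_erase i U),
    ← iw_assoc, iw_self]

lemma MF_erase (w : X) (x : ι → X) {T : Finset ι} {i : ι} (hi : i ∈ T) :
    MF hX w (x i) x (T.erase i) = MF hX w (x i) x T := by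
  conv_rhs => rw [← Finset.insert_erase hi]
  rw [MF_insert hX w (x i) x (Finset.notMem_erase i T), MF_absorb]

lemma MF_anchor (w : X) (x : ι → X) {T : Finset ι} {i j : ι} (hi : i ∈ T) (hj : j ∈ T) :
    MF hX w (x i) x T = MF hX w (x j) x T := by
  have h1 : iw hX w (x j) (MF hX w (x i) x T) = MF hX w (x i) x T := MF_mem_absorb hX w _ x hj
  have h2 : iw hX w (x i) (MF hX w (x j) x T) = MF hX w (x j) x T := MF_mem_absorb hX w _ x hi
  rw [← h1, ← h2, MF_base_swap]

/-- Fold of joins over `b` of the meets `b ⊓ x i`. -/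
noncomputable def JF (w b : X) (x : ι → X) (A : Finset ι) : X :=
  @Finset.fold ι X (infOp hX b) (infOpComm hX b) (infOpAssoc hX b) w
    (fun i => iw hX w b (x i)) A

@[simp] lemma JF_empty (w b : X) (x : ι → X) : JF hX w b x ∅ = w := rfl

lemma JF_insert (w b : X) (x : ι → X) {k : ι} {A : Finset ι} (h : k ∉ A) :
    JF hX w b x (insert k A) = iw hX b (iw hX w b (x k)) (JF hX w b x A) := by
  letI := infOpComm hX b; letI := infOpAssoc hX b
  exact Finset.fold_insert h

lemma JF_le (w b : X) (x : ι → X) (A : Finset ι) : Btw w (JF hX w b x A) b := by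
  induction A using Finset.induction_on with
  | empty => exact btw_rfl_left w b
  | @insert k A hk ih =>
      rw [JF_insert hX w b x hk]
      have h1 : Btw w (iw hX w b (x k)) b := iw_le_left hX w b (x k)
      exact (le_sup hX h1 (JF hX w b x A)).2

/-- distributivity of folds: `JF b' A = b' ⊓ JF b A` where `b' = b ⊓ x j`. -/
lemma JF_dist (w b : X) (x : ι → X) (j : ι) (A : Finset ι) :
    JF hX w (iw hX w b (x j)) x A
      = iw hX w (iw hX w b (x j)) (JF hX w b x A) := by
  have hb'b : Btw w (iw hX w b (x j)) b := iw_le_left hX w b (x j)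
  induction A using Finset.induction_on with
  | empty =>
      rw [JF_empty, JF_empty, iw_comm]
      exact (btw_iw_left hX (btw_rfl_left w (iw hX w b (x j)))).symm
  | @insert k A hk ih =>
      rw [JF_insert hX w _ x hk, JF_insert hX w b x hk, ih]
      have hP : Btw w (iw hX w b (x k)) b := iw_le_left hX w b (x k)
      have hQ : Btw w (JF hX w b x A) b := JF_le hX w b x A
      have hbd := binDist hX (w := w) hP hQ hb'b
      rw [hbd]
      have arg1 : iw hX w (iw hX w b (x k)) (iw hX w b (x j))
          = iw hX w (iw hX w b (x j)) (x k) := by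
        rw [iw_assoc hX w b (x k), iw_left_comm hX w (x k) b (x j),
          ← iw_assoc hX w b b, iw_self, iw_assoc hX w b (x j) (x k),
          iw_comm hX w (x k) (x j)]
      have arg2 : iw hX w (JF hX w b x A) (iw hX w b (x j))
          = iw hX w (iw hX w b (x j)) (JF hX w b x A) := iw_comm hX w _ _
      rw [arg1, arg2]
      have h1 : Btw w (iw hX w (iw hX w b (x j)) (x k)) (iw hX w b (x j)) :=
        iw_le_left hX w _ (x k)
      have h2 : Btw w (iw hX w (iw hX w b (x j)) (JF hX w b x A)) (iw hX w b (x j)) :=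
        iw_le_left hX w _ _
      exact (join_agree hX h1 h2 hb'b).symm

/-- MASTER : the alternating sum identity. -/
lemma master (w : X) (x : ι → X) (A : Finset ι) : ∀ b : X,
    ∑ U ∈ A.powerset, (-1 : ℝ) ^ U.card * dist w (MF hX w b x U)
      = dist w b - dist w (JF hX w b x A) := by
  induction A using Finset.induction_on with
  | empty =>
      intro b
      simp [Finset.powerset_empty]
  | @insert j A hk ih =>
      intro b
      rw [Finset.sum_powerset_insert hk]
      have step2 : ∀ U ∈ A.powerset,
          (-1 : ℝ) ^ (insert j U).card * dist w (MF hX w b x (insert j U))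
            = -((-1 : ℝ) ^ U.card * dist w (MF hX w (iw hX w b (x j)) x U)) := by
        intro U hU
        have hjU : j ∉ U := fun h => hk (Finset.mem_powerset.mp hU h)
        rw [Finset.card_insert_of_notMem hjU, MF_insert hX w b x hjU, pow_succ,
          MF_iw_base]
        ring
      rw [Finset.sum_congr rfl step2, Finset.sum_neg_distrib, ih b,
        ih (iw hX w b (x j)), JF_insert hX w b x hk]
      have hsup := v_sup hX (iw_le_left hX w b (x j)) (JF_le hX w b x A)
      have hdist : dist w (JF hX w (iw hX w b (x j)) x A)
          = dist w (iw hX w (iw hX w b (x j)) (JF hX w b x A)) := by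
        rw [JF_dist]
      rw [hsup, hdist]
      ring

/-- MASTER inequality. -/
lemma master_nonneg (w : X) (x : ι → X) (A : Finset ι) (b : X) :
    0 ≤ ∑ U ∈ A.powerset, (-1 : ℝ) ^ U.card * dist w (MF hX w b x U) := by
  rw [master hX w x A b]
  have := dist_w_mono (JF_le hX w b x A)
  linarith

end Fold


section Fme

set_option linter.unusedSectionVars false

variable {ι : Type*} [LinearOrder ι] [DecidableEq ι] [Fintype ι]

noncomputable def Fme (w : X) (x : ι → X) (T : Finset ι) : ℝ :=
  if h : T.Nonempty then
    dist w (MF hX w (x (T.min' h)) x (T.erase (T.min' h))) else 0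

lemma Fme_eq (w : X) (x : ι → X) {T : Finset ι} (h : T.Nonempty) {i : ι} (hi : i ∈ T) :
    Fme hX w x T = dist w (MF hX w (x i) x T) := by
  rw [Fme, dif_pos h, MF_erase hX w x (T.min'_mem h),
    MF_anchor hX w x (T.min'_mem h) hi]

lemma Fme_pair (w : X) (x : ι → X) (i j : ι) :
    Fme hX w x {i, j} = dist w (iw hX w (x i) (x j)) := by
  have hi : i ∈ ({i, j} : Finset ι) := Finset.mem_insert_self i {j}
  have hne : ({i, j} : Finset ι).Nonempty := ⟨i, hi⟩
  rw [Fme_eq hX w x hne hi]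
  by_cases hij : i = j
  · subst hij
    have : ({i, i} : Finset ι) = {i} := by simp
    rw [this]
    have h0 : i ∉ (∅ : Finset ι) := by simp
    have : ({i} : Finset ι) = insert i ∅ := rfl
    rw [this, MF_insert hX w (x i) x h0, MF_empty, iw_self]
  · have hij' : i ∉ ({j} : Finset ι) := by simp [hij]
    have hj0 : j ∉ (∅ : Finset ι) := by simp
    have : ({i, j} : Finset ι) = insert i {j} := rfl
    rw [this, MF_insert hX w (x i) x hij']
    have : ({j} : Finset ι) = insert j ∅ := rfl
    rw [this, MF_insert hX w (x i) x hj0, MF_empty]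
    rw [iw_left_comm hX w (x i) (x j), iw_self, iw_comm]

lemma Fme_union (w : X) (x : ι → X) {S U : Finset ι} (hS : S.Nonempty)
    (hdisj : Disjoint S U) :
    Fme hX w x (S ∪ U)
      = dist w (MF hX w (MF hX w (x (S.min' hS)) x (S.erase (S.min' hS))) x U) := by
  set m := S.min' hS with hm
  have hmS : m ∈ S := S.min'_mem hS
  have hmSU : m ∈ S ∪ U := Finset.mem_union_left U hmS
  have hne : (S ∪ U).Nonempty := ⟨m, hmSU⟩
  rw [Fme_eq hX w x hne hmSU]
  have hdisj2 : Disjoint (S.erase m) U :=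
    Finset.disjoint_of_subset_left (Finset.erase_subset m S) hdisj
  rw [MF_union hX w _ x hdisj2]
  have hmU : m ∉ U := fun h => (Finset.disjoint_left.mp hdisj hmS) h
  have hmem : m ∉ S.erase m ∪ U := by
    simp only [Finset.mem_union, Finset.mem_erase]
    rintro (⟨h1, _⟩ | h1)
    · exact h1 rfl
    · exact hmU h1
  have hSU : S ∪ U = insert m (S.erase m ∪ U) := by
    rw [← Finset.insert_union, Finset.insert_erase hmS]
  rw [hSU, MF_insert hX w (x m) x hmem, MF_absorb]

lemma hS_nonneg (w : X) (x : ι → X) {S : Finset ι} (hS : S.Nonempty) :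
    0 ≤ ∑ U ∈ Sᶜ.powerset, (-1 : ℝ) ^ U.card * Fme hX w x (S ∪ U) := by
  have hcong : ∀ U ∈ Sᶜ.powerset,
      (-1 : ℝ) ^ U.card * Fme hX w x (S ∪ U)
        = (-1 : ℝ) ^ U.card
            * dist w (MF hX w (MF hX w (x (S.min' hS)) x (S.erase (S.min' hS))) x U) := by
    intro U hU
    have hdisj : Disjoint S U := by
      rw [Finset.disjoint_left]
      intro a ha hb
      exact (Finset.mem_compl.mp (Finset.mem_powerset.mp hU hb)) ha
    rw [Fme_union hX w x hS hdisj]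
  rw [Finset.sum_congr rfl hcong]
  exact master_nonneg hX w x Sᶜ _

end Fme

section PartA

set_option linter.unusedSectionVars false

variable {ι : Type*} [Fintype ι] [DecidableEq ι]

lemma alt_sum_real (s : Finset ι) :
    ∑ t ∈ s.powerset, (-1 : ℝ) ^ t.card = if s = ∅ then 1 else 0 := by
  have h := Finset.sum_powerset_neg_one_pow_card (x := s)
  have h2 : ((∑ m ∈ s.powerset, (-1 : ℤ) ^ m.card : ℤ) : ℝ)
      = ∑ t ∈ s.powerset, (-1 : ℝ) ^ t.card := by push_cast; rfl
  rw [← h2, h]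
  split <;> simp

lemma inner_reindex (F : Finset ι → ℝ) (S : Finset ι) :
    ∑ U ∈ Sᶜ.powerset, (-1 : ℝ) ^ U.card * F (S ∪ U)
      = ∑ V ∈ (Finset.univ : Finset ι).powerset,
          if S ⊆ V then (-1 : ℝ) ^ (V \ S).card * F V else 0 := by
  rw [← Finset.sum_filter]
  refine Finset.sum_nbij' (fun U => S ∪ U) (fun V => V \ S) ?_ ?_ ?_ ?_ ?_
  · intro U hU
    simp only [Finset.mem_filter, Finset.mem_powerset]
    exact ⟨Finset.subset_univ _, Finset.subset_union_left⟩
  · intro V hV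
    simp only [Finset.mem_powerset]
    intro a ha
    simp only [Finset.mem_compl]
    exact (Finset.mem_sdiff.mp ha).2
  · intro U hU
    have hdisj : Disjoint S U := by
      rw [Finset.disjoint_left]
      intro a ha hb
      exact (Finset.mem_compl.mp (Finset.mem_powerset.mp hU hb)) ha
    exact Finset.union_sdiff_cancel_left hdisj
  · intro V hV
    exact Finset.union_sdiff_of_subset (Finset.mem_filter.mp hV).2
  · intro U hU
    have hdisj : Disjoint S U := by
      rw [Finset.disjoint_left]
      intro a ha hb
      exact (Finset.mem_compl.mp (Finset.mem_powerset.mp hU hb)) ha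
    rw [Finset.union_sdiff_cancel_left hdisj]

lemma coeff_eval (i j : ι) (V : Finset ι) :
    (∑ S ∈ (Finset.univ : Finset ι).powerset,
      if i ∈ S ∧ j ∈ S ∧ S ⊆ V then (-1 : ℝ) ^ (V \ S).card else 0)
      = if V = {i, j} then 1 else 0 := by
  rw [← Finset.sum_filter]
  by_cases hij : ({i, j} : Finset ι) ⊆ V
  · have key : ∑ S ∈ (Finset.univ : Finset ι).powerset.filter
        (fun S => i ∈ S ∧ j ∈ S ∧ S ⊆ V), (-1 : ℝ) ^ (V \ S).card
        = ∑ W ∈ (V \ {i, j}).powerset, (-1 : ℝ) ^ W.card := by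
      refine Finset.sum_nbij' (fun S => V \ S) (fun W => V \ W) ?_ ?_ ?_ ?_ ?_
      · intro S hS
        obtain ⟨-, h1, h2, h3⟩ := Finset.mem_filter.mp hS
        simp only [Finset.mem_powerset]
        refine Finset.sdiff_subset_sdiff (le_refl V) ?_
        rw [Finset.insert_subset_iff, Finset.singleton_subset_iff]
        exact ⟨h1, h2⟩
      · intro W hW
        have hWV : W ⊆ V \ {i, j} := Finset.mem_powerset.mp hW
        simp only [Finset.mem_filter, Finset.mem_powerset, Finset.mem_sdiff]
        have hiW : i ∉ W := fun h => by
          have := hWV h; simp [Finset.mem_sdiff] at this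
        have hjW : j ∉ W := fun h => by
          have := hWV h; simp [Finset.mem_sdiff] at this
        have hiV : i ∈ V := hij (Finset.mem_insert_self i {j})
        have hjV : j ∈ V := hij (by simp)
        exact ⟨Finset.subset_univ _, ⟨hiV, hiW⟩, ⟨hjV, hjW⟩, Finset.sdiff_subset⟩
      · intro S hS
        obtain ⟨-, -, -, h3⟩ := Finset.mem_filter.mp hS
        exact Finset.sdiff_sdiff_eq_self h3
      · intro W hW
        have hWV : W ⊆ V := (Finset.mem_powerset.mp hW).trans Finset.sdiff_subset
        exact Finset.sdiff_sdiff_eq_self hWV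
      · intro S hS; rfl
    rw [key, alt_sum_real]
    by_cases hV : V = ({i, j} : Finset ι)
    · simp [hV]
    · have hne : V \ ({i, j} : Finset ι) ≠ ∅ := fun h =>
        hV (le_antisymm (Finset.sdiff_eq_empty_iff_subset.mp h) hij)
      simp [hV, hne]
  · have hempty : (Finset.univ : Finset ι).powerset.filter
        (fun S => i ∈ S ∧ j ∈ S ∧ S ⊆ V) = ∅ := by
      rw [Finset.filter_eq_empty_iff]
      rintro S - ⟨h1, h2, h3⟩
      apply hij
      rw [Finset.insert_subset_iff, Finset.singleton_subset_iff]
      exact ⟨h3 h1, h3 h2⟩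
    rw [hempty]
    have hne : V ≠ ({i, j} : Finset ι) := fun h => hij (h ▸ le_refl _)
    simp [hne]

lemma keylemma (F : Finset ι → ℝ) (i j : ι) :
    (∑ S ∈ (Finset.univ : Finset ι).powerset,
      if i ∈ S ∧ j ∈ S then ∑ U ∈ Sᶜ.powerset, (-1 : ℝ) ^ U.card * F (S ∪ U) else 0)
      = F {i, j} := by
  have e1 : ∀ S ∈ (Finset.univ : Finset ι).powerset,
      (if i ∈ S ∧ j ∈ S then ∑ U ∈ Sᶜ.powerset, (-1 : ℝ) ^ U.card * F (S ∪ U) else 0)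
        = ∑ V ∈ (Finset.univ : Finset ι).powerset,
            (if i ∈ S ∧ j ∈ S ∧ S ⊆ V then (-1 : ℝ) ^ (V \ S).card else 0) * F V := by
    intro S hS
    by_cases h : i ∈ S ∧ j ∈ S
    · rw [if_pos h, inner_reindex]
      refine Finset.sum_congr rfl fun V hV => ?_
      by_cases h2 : S ⊆ V
      · rw [if_pos h2, if_pos ⟨h.1, h.2, h2⟩]
      · rw [if_neg h2, if_neg (by tauto), zero_mul]
    · rw [if_neg h]
      symm
      refine Finset.sum_eq_zero fun V hV => ?_
      rw [if_neg (by tauto), zero_mul]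
  rw [Finset.sum_congr rfl e1, Finset.sum_comm]
  have e2 : ∀ V ∈ (Finset.univ : Finset ι).powerset,
      (∑ S ∈ (Finset.univ : Finset ι).powerset,
        (if i ∈ S ∧ j ∈ S ∧ S ⊆ V then (-1 : ℝ) ^ (V \ S).card else 0) * F V)
        = (if V = {i, j} then 1 else 0) * F V := by
    intro V hV
    rw [← Finset.sum_mul, coeff_eval]
  rw [Finset.sum_congr rfl e2]
  have e3 : ∀ V ∈ (Finset.univ : Finset ι).powerset,
      (if V = ({i, j} : Finset ι) then 1 else 0) * F V
        = if V = ({i, j} : Finset ι) then F V else 0 := by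
    intro V hV
    split <;> ring
  rw [Finset.sum_congr rfl e3, Finset.sum_ite_eq' _ ({i, j} : Finset ι) F]
  simp

lemma partA (F : Finset ι → ℝ) (α : ι → ℝ) :
    ∑ i, ∑ j, α i * α j * F {i, j}
      = ∑ S ∈ (Finset.univ : Finset ι).powerset,
          (∑ U ∈ Sᶜ.powerset, (-1 : ℝ) ^ U.card * F (S ∪ U)) * (∑ i ∈ S, α i) ^ 2 := by
  have step1 : ∀ S ∈ (Finset.univ : Finset ι).powerset,
      (∑ U ∈ Sᶜ.powerset, (-1 : ℝ) ^ U.card * F (S ∪ U)) * (∑ i ∈ S, α i) ^ 2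
        = ∑ i, ∑ j, (if i ∈ S then (if j ∈ S then
            (∑ U ∈ Sᶜ.powerset, (-1 : ℝ) ^ U.card * F (S ∪ U)) * (α i * α j) else 0) else 0) := by
    intro S hS
    set hS' := ∑ U ∈ Sᶜ.powerset, (-1 : ℝ) ^ U.card * F (S ∪ U) with hdef
    have sq : (∑ i ∈ S, α i) ^ 2 = ∑ i ∈ S, ∑ j ∈ S, α i * α j := by
      rw [pow_two, Finset.sum_mul_sum]
    rw [sq, Finset.mul_sum]
    have inner : ∀ i, hS' * ∑ j ∈ S, α i * α j = ∑ j ∈ S, hS' * (α i * α j) := by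
      intro i; rw [Finset.mul_sum]
    rw [Finset.sum_congr rfl fun i _ => inner i]
    -- now extend both sums to univ with ite
    have ext2 : ∀ i, (∑ j ∈ S, hS' * (α i * α j))
        = ∑ j, (if j ∈ S then hS' * (α i * α j) else 0) := by
      intro i
      rw [Finset.sum_ite_mem, Finset.univ_inter]
    have ext1 : (∑ i ∈ S, ∑ j, (if j ∈ S then hS' * (α i * α j) else 0))
        = ∑ i, (if i ∈ S then ∑ j, (if j ∈ S then hS' * (α i * α j) else 0) else 0) := by
      rw [Finset.sum_ite_mem, Finset.univ_inter]
    rw [Finset.sum_congr rfl fun i _ => ext2 i, ext1]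
    refine Finset.sum_congr rfl fun i _ => ?_
    by_cases h : i ∈ S <;> simp [h]
  symm
  calc
    ∑ S ∈ (Finset.univ : Finset ι).powerset,
        (∑ U ∈ Sᶜ.powerset, (-1 : ℝ) ^ U.card * F (S ∪ U)) * (∑ i ∈ S, α i) ^ 2
      = ∑ S ∈ (Finset.univ : Finset ι).powerset, ∑ i, ∑ j,
          (if i ∈ S then (if j ∈ S then
            (∑ U ∈ Sᶜ.powerset, (-1 : ℝ) ^ U.card * F (S ∪ U)) * (α i * α j) else 0) else 0) :=
        Finset.sum_congr rfl step1
    _ = ∑ i, ∑ S ∈ (Finset.univ : Finset ι).powerset, ∑ j,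
          (if i ∈ S then (if j ∈ S then
            (∑ U ∈ Sᶜ.powerset, (-1 : ℝ) ^ U.card * F (S ∪ U)) * (α i * α j) else 0) else 0) :=
        Finset.sum_comm
    _ = ∑ i, ∑ j, ∑ S ∈ (Finset.univ : Finset ι).powerset,
          (if i ∈ S then (if j ∈ S then
            (∑ U ∈ Sᶜ.powerset, (-1 : ℝ) ^ U.card * F (S ∪ U)) * (α i * α j) else 0) else 0) :=
        Finset.sum_congr rfl fun i _ => Finset.sum_comm
    _ = ∑ i, ∑ j, α i * α j * F {i, j} := ?_
  refine Finset.sum_congr rfl fun i _ => Finset.sum_congr rfl fun j _ => ?_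
  have per : ∀ S ∈ (Finset.univ : Finset ι).powerset,
      (if i ∈ S then (if j ∈ S then
        (∑ U ∈ Sᶜ.powerset, (-1 : ℝ) ^ U.card * F (S ∪ U)) * (α i * α j) else 0) else 0)
      = (α i * α j) * (if i ∈ S ∧ j ∈ S then
          ∑ U ∈ Sᶜ.powerset, (-1 : ℝ) ^ U.card * F (S ∪ U) else 0) := by
    intro S hS
    by_cases h1 : i ∈ S <;> by_cases h2 : j ∈ S <;>
      simp [h1, h2] <;> ring
  rw [Finset.sum_congr rfl per, ← Finset.mul_sum, keylemma]

end PartA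

end MedianNeg

open MedianNeg

/-- Every median metric space is negative definite. -/
theorem stmt12 {X : Type*} [MetricSpace X] (hX : IsMedianSpace X)
    (n : ℕ) (x : Fin n → X) (α : Fin n → ℝ) (hα : ∑ i, α i = 0) :
    ∑ i, ∑ j, α i * α j * dist (x i) (x j) ≤ 0 := by
  rcases Nat.eq_zero_or_pos n with hn | hn
  · subst hn; simp
  · set w := x ⟨0, hn⟩ with hw
    have e0 : ∑ i, ∑ j, α i * α j * dist (x i) (x j)
        = (∑ i, ∑ j, α i * α j * dist w (x i))
          + (∑ i, ∑ j, α i * α j * dist w (x j))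
          - 2 * ∑ i, ∑ j, α i * α j * dist w (iw hX w (x i) (x j)) := by
      have inner : ∀ i : Fin n, ∑ j, α i * α j * dist (x i) (x j)
          = (∑ j, α i * α j * dist w (x i)) + (∑ j, α i * α j * dist w (x j))
            - 2 * ∑ j, α i * α j * dist w (iw hX w (x i) (x j)) := by
        intro i
        rw [Finset.mul_sum, ← Finset.sum_add_distrib, ← Finset.sum_sub_distrib]
        refine Finset.sum_congr rfl fun j _ => ?_
        rw [dist_eq_inf hX w (x i) (x j)]
        ring
      rw [Finset.sum_congr rfl fun i _ => inner i,
        Finset.sum_sub_distrib, Finset.sum_add_distrib, ← Finset.mul_sum]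
    have z1 : ∑ i, ∑ j, α i * α j * dist w (x i) = 0 := by
      have inner : ∀ i : Fin n, ∑ j, α i * α j * dist w (x i)
          = (α i * dist w (x i)) * ∑ j, α j := by
        intro i
        rw [Finset.mul_sum]
        exact Finset.sum_congr rfl fun j _ => by ring
      rw [Finset.sum_congr rfl fun i _ => inner i]
      simp [hα]
    have z2 : ∑ i, ∑ j, α i * α j * dist w (x j) = 0 := by
      have inner : ∀ i : Fin n, ∑ j, α i * α j * dist w (x j)
          = α i * ∑ j, α j * dist w (x j) := by
        intro i
        rw [Finset.mul_sum]
        exact Finset.sum_congr rfl fun j _ => by ring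
      rw [Finset.sum_congr rfl fun i _ => inner i, ← Finset.sum_mul, hα, zero_mul]
    have hQ : 0 ≤ ∑ i, ∑ j, α i * α j * dist w (iw hX w (x i) (x j)) := by
      have hF : ∀ i : Fin n, ∑ j, α i * α j * dist w (iw hX w (x i) (x j))
          = ∑ j, α i * α j * Fme hX w x {i, j} := by
        intro i
        refine Finset.sum_congr rfl fun j _ => ?_
        rw [Fme_pair hX w x i j]
      rw [Finset.sum_congr rfl fun i _ => hF i, partA (Fme hX w x) α]
      refine Finset.sum_nonneg fun S hS => ?_
      by_cases hne : S.Nonempty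
      · exact mul_nonneg (hS_nonneg hX w x hne) (sq_nonneg _)
      · rw [Finset.not_nonempty_iff_eq_empty] at hne
        simp [hne]
    rw [e0, z1, z2]
    linarith
end

section
/- Every hypermetric space is negative definite. -/
section Aux

variable {X : Type*} [MetricSpace X]

lemma ratClear15 (n : ℕ) (q : Fin n → ℚ) :
    ∃ (N : ℕ) (t : Fin n → ℤ), 0 < N ∧ ∀ i, ((t i : ℚ)) = q i * N := by
  refine ⟨∏ i, (q i).den, fun i => (q i).num * ((∏ j, (q j).den) / (q i).den), ?_, ?_⟩
  · exact Finset.prod_pos fun i _ => (q i).pos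
  · intro i
    have hdvd : ((q i).den : ℤ) ∣ (∏ j, (q j).den : ℕ) := by
      exact_mod_cast Int.natCast_dvd_natCast.2 (Finset.dvd_prod_of_mem _ (Finset.mem_univ i))
    obtain ⟨c, hc⟩ := hdvd
    have hcQ : ((∏ j, (q j).den : ℕ) : ℚ) = ((q i).den : ℚ) * (c : ℚ) := by exact_mod_cast hc
    push_cast [hc]
    rw [Int.mul_ediv_cancel_left _ (by exact_mod_cast (q i).den_nz : ((q i).den:ℤ) ≠ 0)]
    push_cast at hcQ
    rw [hcQ, ← mul_assoc, Rat.mul_den_eq_num]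

lemma intCase15
    (hyp : ∀ (n : ℕ) (x : Fin n → X) (t : Fin n → ℤ), (∑ i, t i) = 1 →
      ∑ i, ∑ j, (t i : ℝ) * (t j : ℝ) * dist (x i) (x j) ≤ 0)
    (m : ℕ) (x : Fin m → X) (t : Fin m → ℤ) (ht : ∑ i, t i = 0) :
    ∑ i, ∑ j, (t i : ℝ) * (t j : ℝ) * dist (x i) (x j) ≤ 0 := by
  rcases m with _ | m
  · simp
  have h1 := hyp (m + 2) (Fin.cons (x 0) x) (Fin.cons 1 t) (by simp [Fin.sum_cons, ht])
  have h2 := hyp (m + 2) (Fin.cons (x 0) x) (Fin.cons 1 (-t)) (by simp [Fin.sum_cons, ht])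
  have hd : ∀ i : Fin (m+1), dist (x i) (x 0) = dist (x 0) (x i) := fun i => dist_comm _ _
  simp only [Fin.sum_univ_succ, Fin.cons_zero, Fin.cons_succ, Pi.neg_apply, Int.cast_one,
    Int.cast_neg, dist_self, mul_zero, zero_add, one_mul, mul_one, neg_mul, mul_neg,
    neg_neg, neg_zero, Finset.sum_neg_distrib, Finset.sum_add_distrib, hd] at h1 h2 ⊢
  ring_nf at h1 h2 ⊢
  have hAB : (∑ i : Fin m, (t i.succ : ℝ) * (t 0 : ℝ) * dist (x 0) (x i.succ)) =
      ∑ i : Fin m, (t 0 : ℝ) * (t i.succ : ℝ) * dist (x 0) (x i.succ) :=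
    Finset.sum_congr rfl fun i _ => by ring
  linarith

lemma ratCase15
    (hyp : ∀ (n : ℕ) (x : Fin n → X) (t : Fin n → ℤ), (∑ i, t i) = 1 →
      ∑ i, ∑ j, (t i : ℝ) * (t j : ℝ) * dist (x i) (x j) ≤ 0)
    (m : ℕ) (x : Fin m → X) (q : Fin m → ℚ) (hq : ∑ i, q i = 0) :
    ∑ i, ∑ j, (q i : ℝ) * (q j : ℝ) * dist (x i) (x j) ≤ 0 := by
  obtain ⟨N, t, hN, htq⟩ := ratClear15 m q
  have htsum : ∑ i, t i = 0 := by
    have : ((∑ i, t i : ℤ) : ℚ) = 0 := by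
      push_cast
      simp only [htq, ← Finset.sum_mul, hq, zero_mul]
    exact_mod_cast this
  have h := intCase15 hyp m x t htsum
  have htR : ∀ i, ((t i : ℝ)) = (q i : ℝ) * N := by
    intro i; exact_mod_cast congrArg (fun r : ℚ => (r : ℝ)) (htq i)
  have key : ∑ i, ∑ j, (t i : ℝ) * (t j : ℝ) * dist (x i) (x j)
      = (N : ℝ)^2 * ∑ i, ∑ j, (q i : ℝ) * (q j : ℝ) * dist (x i) (x j) := by
    rw [Finset.mul_sum]
    refine Finset.sum_congr rfl fun i _ => ?_
    rw [Finset.mul_sum]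
    refine Finset.sum_congr rfl fun j _ => ?_
    rw [htR i, htR j]; ring
  rw [key] at h
  have hN2 : (0:ℝ) < (N:ℝ)^2 := by positivity
  nlinarith

end Aux

/-- Every hypermetric space is negative definite. -/
theorem stmt15 {X : Type*} [MetricSpace X]
    (hyp : ∀ (n : ℕ) (x : Fin n → X) (t : Fin n → ℤ), (∑ i, t i) = 1 →
      ∑ i, ∑ j, (t i : ℝ) * (t j : ℝ) * dist (x i) (x j) ≤ 0)
    (n : ℕ) (x : Fin n → X) (α : Fin n → ℝ) (hα : ∑ i, α i = 0) :
    ∑ i, ∑ j, α i * α j * dist (x i) (x j) ≤ 0 := by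
  rcases Nat.eq_zero_or_pos n with hn | hn
  · subst hn; simp
  have hnR : (n : ℝ) ≠ 0 := by positivity
  set F : (Fin n → ℝ) → ℝ := fun β =>
    ∑ i, ∑ j, (β i - (∑ k, β k)/n) * (β j - (∑ k, β k)/n) * dist (x i) (x j) with hF
  have hcont : Continuous F := by
    apply continuous_finset_sum
    intro i _
    apply continuous_finset_sum
    intro j _
    fun_prop
  have hclosed : IsClosed {β : Fin n → ℝ | F β ≤ 0} := isClosed_le hcont continuous_const
  have hdense : Dense (Set.pi Set.univ fun _ : Fin n => Set.range ((↑) : ℚ → ℝ)) :=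
    dense_pi Set.univ fun _ _ => Rat.denseRange_cast
  have hsub : (Set.pi Set.univ fun _ : Fin n => Set.range ((↑) : ℚ → ℝ)) ⊆
      {β : Fin n → ℝ | F β ≤ 0} := by
    intro β hβ
    choose q hq using fun i => hβ i (Set.mem_univ i)
    have hnQ : (n : ℚ) ≠ 0 := by positivity
    set q' : Fin n → ℚ := fun i => q i - (∑ k, q k)/n with hq'
    have hq'sum : ∑ i, q' i = 0 := by
      simp only [hq', Finset.sum_sub_distrib, Finset.sum_const, Finset.card_univ,
        Fintype.card_fin, nsmul_eq_mul]
      field_simp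
      ring
    have h := ratCase15 hyp n x q' hq'sum
    have hcast : ∀ i, ((q' i : ℝ)) = β i - (∑ k, β k)/n := by
      intro i
      simp only [hq']
      push_cast
      rw [hq i]
      congr 1
      congr 1
      exact Finset.sum_congr rfl fun k _ => hq k
    simp only [Set.mem_setOf_eq, hF]
    calc ∑ i, ∑ j, (β i - (∑ k, β k)/n) * (β j - (∑ k, β k)/n) * dist (x i) (x j)
        = ∑ i, ∑ j, (q' i : ℝ) * (q' j : ℝ) * dist (x i) (x j) := by
          refine Finset.sum_congr rfl fun i _ => Finset.sum_congr rfl fun j _ => ?_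
          rw [hcast i, hcast j]
      _ ≤ 0 := h
  have hall : ∀ β, F β ≤ 0 := by
    intro β
    have : β ∈ closure (Set.pi Set.univ fun _ : Fin n => Set.range ((↑) : ℚ → ℝ)) :=
      hdense β
    exact hclosed.closure_subset (closure_mono hsub this)
  have := hall α
  simpa [hF, hα] using this
end

section
/- In a uniformly convex, complete metric space, every non-empty bounded subset has a unique circumcenter, i.e., a unique point minimizing the circumradius function r(x) = sup_{a∈A} d(x,a). -/
/-- In a uniformly convex complete metric space (formalized via a midpoint map
and a modulus of convexity), every non-empty bounded subset has a unique
circumcenter, i.e. a unique minimizer of `r(x) = sup_{a ∈ A} d(x,a)`. -/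
theorem stmt16 {X : Type*} [MetricSpace X] [CompleteSpace X]
    (mid : X → X → X)
    (hmid : ∀ x y : X, dist x (mid x y) = dist x y / 2 ∧
                       dist (mid x y) y = dist x y / 2)
    (uc : ∀ ε > (0 : ℝ), ∃ δ > (0 : ℝ), ∀ x y z : X,
      dist x y ≥ ε * max (dist z x) (dist z y) →
      dist z (mid x y) ≤ (1 - δ) * max (dist z x) (dist z y))
    (A : Set X) (hne : A.Nonempty) (hbd : Bornology.IsBounded A) :
    ∃! c : X, ∀ x : X, (⨆ a : A, dist c (a : X)) ≤ ⨆ a : A, dist x (a : X) := by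
  clear hmid
  obtain ⟨a₀, ha₀⟩ := hne
  haveI : Nonempty A := ⟨⟨a₀, ha₀⟩⟩
  haveI : Nonempty X := ⟨a₀⟩
  set r : X → ℝ := fun x => ⨆ a : A, dist x (a : X) with hrdef
  obtain ⟨C, hC⟩ := Metric.isBounded_iff.mp hbd
  have hbdd : ∀ x : X, BddAbove (Set.range fun a : A => dist x (a : X)) := by
    intro x
    refine ⟨dist x a₀ + C, ?_⟩
    rintro _ ⟨a, rfl⟩
    calc dist x (a : X) ≤ dist x a₀ + dist a₀ (a : X) := dist_triangle _ _ _
      _ ≤ dist x a₀ + C := by gcongr; exact hC ha₀ a.2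
  have hle : ∀ (x : X) (a : A), dist x (a : X) ≤ r x := fun x a => le_ciSup (hbdd x) a
  have hsup_le : ∀ (x : X) (B : ℝ), (∀ a : A, dist x (a : X) ≤ B) → r x ≤ B :=
    fun x B h => ciSup_le h
  have hr0 : ∀ x : X, 0 ≤ r x := fun x => le_trans dist_nonneg (hle x ⟨a₀, ha₀⟩)
  have hbddbelow : BddBelow (Set.range r) := ⟨0, by rintro _ ⟨x, rfl⟩; exact hr0 x⟩
  set R : ℝ := ⨅ x : X, r x with hRdef
  have hRle : ∀ x : X, R ≤ r x := fun x => ciInf_le hbddbelow x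
  have hR0 : 0 ≤ R := le_ciInf hr0
  -- key lemma: sublevel sets of r near R have small diameter
  have key : ∀ ε > (0 : ℝ), ∃ η > (0 : ℝ), ∀ x y : X,
      r x ≤ R + η → r y ≤ R + η → dist x y ≤ ε := by
    intro ε hε
    rcases lt_or_eq_of_le hR0 with hRpos | hR0'
    · -- R > 0
      have hR1 : (0 : ℝ) < R + 1 := by linarith
      obtain ⟨δ, hδ, huc⟩ := uc (ε / (R + 1)) (div_pos hε hR1)
      set δ' : ℝ := min δ (1/2) with hδ'def
      have hδ'pos : 0 < δ' := lt_min hδ (by norm_num)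
      have hδ'le : δ' ≤ 1/2 := min_le_right _ _
      refine ⟨min (δ' * R / 2) 1, lt_min (by positivity) one_pos, ?_⟩
      intro x y hx hy
      by_contra hcon
      push_neg at hcon
      set η : ℝ := min (δ' * R / 2) 1 with hηdef
      have hη1 : η ≤ 1 := min_le_right _ _
      have hη2 : η ≤ δ' * R / 2 := min_le_left _ _
      have hηpos : 0 < η := lt_min (by positivity) one_pos
      have hmidle : r (mid x y) ≤ (1 - δ') * (R + η) := by
        apply hsup_le
        intro a
        have hmax : max (dist (a : X) x) (dist (a : X) y) ≤ R + η := by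
          apply max_le
          · rw [dist_comm]; exact le_trans (hle x a) hx
          · rw [dist_comm]; exact le_trans (hle y a) hy
        have hcond : dist x y ≥ ε / (R + 1) * max (dist (a : X) x) (dist (a : X) y) := by
          have h1 : ε / (R + 1) * max (dist (a : X) x) (dist (a : X) y)
              ≤ ε / (R + 1) * (R + 1) := by
            apply mul_le_mul_of_nonneg_left _ (le_of_lt (div_pos hε hR1))
            calc max (dist (a : X) x) (dist (a : X) y) ≤ R + η := hmax
              _ ≤ R + 1 := by linarith
          rw [div_mul_cancel₀ _ (ne_of_gt hR1)] at h1
          linarith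
        have := huc x y a hcond
        rw [dist_comm]
        calc dist (a : X) (mid x y)
            ≤ (1 - δ) * max (dist (a : X) x) (dist (a : X) y) := this
          _ ≤ (1 - δ') * max (dist (a : X) x) (dist (a : X) y) := by
              apply mul_le_mul_of_nonneg_right _ (le_max_of_le_left dist_nonneg)
              have : δ' ≤ δ := min_le_left _ _
              linarith
          _ ≤ (1 - δ') * (R + η) := by
              apply mul_le_mul_of_nonneg_left hmax
              linarith
      have := le_trans (hRle (mid x y)) hmidle
      nlinarith
    · -- R = 0
      refine ⟨ε / 2, by positivity, ?_⟩
      intro x y hx hy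
      have h1 : dist x (a₀ : X) ≤ r x := hle x ⟨a₀, ha₀⟩
      have h2 : dist y (a₀ : X) ≤ r y := hle y ⟨a₀, ha₀⟩
      calc dist x y ≤ dist x a₀ + dist y a₀ := dist_triangle_right _ _ _
        _ ≤ ε := by rw [← hR0'] at hx hy; linarith
  -- minimizing sequence
  have hseq : ∀ n : ℕ, ∃ x : X, r x < R + 1 / (n + 1) := by
    intro n
    apply exists_lt_of_ciInf_lt
    rw [← hRdef]
    have : (0 : ℝ) < 1 / (n + 1) := by positivity
    linarith
  choose u hu using hseq
  have hcauchy : CauchySeq u := by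
    rw [Metric.cauchySeq_iff]
    intro ε hε
    obtain ⟨η, hη, hkey⟩ := key (ε / 2) (by positivity)
    obtain ⟨N, hN⟩ := exists_nat_one_div_lt hη
    refine ⟨N, fun m hm n hn => ?_⟩
    have hbound : ∀ k : ℕ, N ≤ k → r (u k) ≤ R + η := by
      intro k hk
      have h1 : (1 : ℝ) / (k + 1) ≤ 1 / (N + 1) := by
        apply one_div_le_one_div_of_le (by positivity)
        exact_mod_cast Nat.succ_le_succ hk
      have := hu k
      linarith [hN]
    have := hkey (u m) (u n) (hbound m hm) (hbound n hn)
    linarith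
  obtain ⟨c, hc⟩ := cauchySeq_tendsto_of_complete hcauchy
  -- r is 1-Lipschitz
  have hlip : ∀ x y : X, r x ≤ r y + dist x y := by
    intro x y
    apply hsup_le
    intro a
    calc dist x (a : X) ≤ dist x y + dist y (a : X) := dist_triangle _ _ _
      _ ≤ r y + dist x y := by linarith [hle y a]
  have hrc : r c ≤ R := by
    apply le_of_forall_pos_le_add
    intro ζ hζ
    obtain ⟨N₁, hN₁⟩ := exists_nat_one_div_lt (show (0:ℝ) < ζ/2 by positivity)
    obtain ⟨N₂, hN₂⟩ := Metric.tendsto_atTop.mp hc (ζ/2) (by positivity)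
    set n := max N₁ N₂ with hn
    have h1 : (1 : ℝ) / (n + 1) ≤ 1 / (N₁ + 1) := by
      apply one_div_le_one_div_of_le (by positivity)
      exact_mod_cast Nat.succ_le_succ (le_max_left _ _)
    have h2 : dist (u n) c < ζ / 2 := hN₂ n (le_max_right _ _)
    have h3 : r c ≤ r (u n) + dist c (u n) := hlip c (u n)
    rw [dist_comm] at h2
    have := hu n
    linarith
  -- conclusion
  refine ⟨c, fun x => le_trans hrc (hRle x), ?_⟩
  intro y hy
  have hry : r y ≤ R := le_ciInf fun x => hy x
  have : ∀ ε > (0 : ℝ), dist y c ≤ ε := by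
    intro ε hε
    obtain ⟨η, hη, hkey⟩ := key ε hε
    exact hkey y c (by linarith) (by linarith)
  have hd : dist y c ≤ 0 := by
    apply le_of_forall_pos_le_add
    intro ε hε
    simpa using this ε hε
  exact eq_of_dist_eq_zero (le_antisymm hd dist_nonneg)
end

section
/- In a median graph, the path metric coincides with the wall metric: the distance between two vertices equals the number of walls separating them, where walls are given by the halfspaces of the median structure. -/
/-- Geodesic interval in a graph for the path metric. -/
def graphInterval {V : Type*} (G : SimpleGraph V) (x y : V) : Set V :=
  {z | G.dist x z + G.dist z y = G.dist x y}

/-- Convex subsets for the path metric. -/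
def graphConvex {V : Type*} (G : SimpleGraph V) (A : Set V) : Prop :=
  ∀ x ∈ A, ∀ y ∈ A, graphInterval G x y ⊆ A

/-- Halfspaces of the median structure: convex sets with convex complement. -/
def graphHalfspace {V : Type*} (G : SimpleGraph V) (H : Set V) : Prop :=
  graphConvex G H ∧ graphConvex G Hᶜ

section
variable {V : Type*} {G : SimpleGraph V}

abbrev MedG (G : SimpleGraph V) : Prop := ∀ x y z : V, ∃! m : V,
      m ∈ graphInterval G x y ∧ m ∈ graphInterval G y z ∧ m ∈ graphInterval G z x

lemma cm (G : SimpleGraph V) (p q : V) : G.dist p q = G.dist q p := SimpleGraph.dist_comm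

lemma dz (hconn : G.Connected) {a b : V} (h : G.dist a b = 0) : a = b :=
  (hconn.dist_eq_zero_iff).mp h

lemma dadj {p q : V} (h : G.Adj p q) : G.dist p q = 1 :=
  SimpleGraph.dist_eq_one_iff_adj.mpr h

lemma dicho (hconn : G.Connected) (hmed : MedG G) {p q : V} (h : G.Adj p q) (z : V) :
    G.dist z p + 1 = G.dist z q ∨ G.dist z q + 1 = G.dist z p := by
  have hpq : G.dist p q = 1 := dadj h
  obtain ⟨m, ⟨h1, h2, h3⟩, -⟩ := hmed z p q
  simp only [graphInterval, Set.mem_setOf_eq] at h1 h2 h3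
  rcases Nat.eq_zero_or_pos (G.dist p m) with h0 | hpos
  · have hm : p = m := dz hconn h0
    rw [← hm] at h3
    left
    have e1 := cm G q p; have e2 := cm G p z; have e3 := cm G q z
    omega
  · have hmq : m = q := by
      have : G.dist m q = 0 := by omega
      exact dz hconn this
    rw [hmq] at h1
    right
    have e1 := cm G q p
    omega

lemma no_triangle (hconn : G.Connected) (hmed : MedG G) {p q r : V}
    (hpq : G.Adj p q) (hqr : G.Adj q r) (hpr : G.Adj p r) : False := by
  have h1 : G.dist r p = 1 := dadj hpr.symm
  have h2 : G.dist r q = 1 := dadj hqr.symm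
  rcases dicho hconn hmed hpq r with h | h <;> omega

lemma dist_two (hconn : G.Connected) (hmed : MedG G) {p q x : V}
    (hpx : G.Adj x p) (hqx : G.Adj x q) (hne : p ≠ q) : G.dist p q = 2 := by
  have h2 : G.dist p q ≤ 2 := by
    have := hconn.dist_triangle (u := p) (v := x) (w := q)
    have e1 : G.dist p x = 1 := dadj hpx.symm
    have e2 : G.dist x q = 1 := dadj hqx
    omega
  have h0 : G.dist p q ≠ 0 := fun h => hne (dz hconn h)
  have h1 : G.dist p q ≠ 1 := by
    intro h
    exact no_triangle hconn hmed (SimpleGraph.dist_eq_one_iff_adj.mp h) hqx.symm hpx.symm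
  omega

/-- Claim A: a vertex on the `w`-side of edge `uw` cannot have two distinct
neighbors on the `u`-side. -/
lemma claimA (hconn : G.Connected) (hmed : MedG G) {u w : V} (huw : G.Adj u w)
    {a b x : V} (hax : G.Adj a x) (hbx : G.Adj b x) (hab : a ≠ b)
    (ha : G.dist a u + 1 = G.dist a w) (hb : G.dist b u + 1 = G.dist b w)
    (hx : G.dist x w + 1 = G.dist x u) : False := by
  -- crossing facts
  have cxa_u := dicho hconn hmed hax u
  have cxa_w := dicho hconn hmed hax w
  have cxb_u := dicho hconn hmed hbx u
  have cxb_w := dicho hconn hmed hbx w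
  have e1 := cm G u a; have e2 := cm G u x; have e3 := cm G w a; have e4 := cm G w x
  have e5 := cm G u b; have e6 := cm G w b
  have hxu : G.dist x u = G.dist a u + 1 := by omega
  have hbu : G.dist b u = G.dist a u := by omega
  have hxw : G.dist x w = G.dist a u := by omega
  set k := G.dist a u with hk
  have hk1 : 1 ≤ k := by
    by_contra hlt
    have ha' : a = u := dz hconn (by omega)
    have hb' : b = u := dz hconn (by omega)
    exact hab (ha'.trans hb'.symm)
  have hdab : G.dist a b = 2 := dist_two hconn hmed hax.symm hbx.symm hab
  -- t := median (a, b, u)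
  obtain ⟨t, ⟨t1, t2, t3⟩, -⟩ := hmed a b u
  simp only [graphInterval, Set.mem_setOf_eq] at t1 t2 t3
  have f1 := cm G t b; have f2 := cm G t u; have f3 := cm G u t; have f4 := cm G t a
  have hat : G.dist a t = 1 := by omega
  have hbt : G.dist b t = 1 := by omega
  have htu : G.dist t u + 1 = k := by omega
  have hadj_at : G.Adj a t := SimpleGraph.dist_eq_one_iff_adj.mp hat
  have hadj_bt : G.Adj b t := SimpleGraph.dist_eq_one_iff_adj.mp hbt
  have htw : G.dist t w = k := by
    have g1 := hconn.dist_triangle (u := a) (v := t) (w := w)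
    have g2 := hconn.dist_triangle (u := t) (v := u) (w := w)
    have g3 : G.dist u w = 1 := dadj huw
    omega
  -- x ≠ t, d x t = 2
  have hxt : G.dist x t = 2 := dist_two hconn hmed hax hadj_at (by
    intro h; rw [h] at hxu; omega)
  -- s := median (x, t, w)
  obtain ⟨s, ⟨s1, s2, s3⟩, -⟩ := hmed x t w
  simp only [graphInterval, Set.mem_setOf_eq] at s1 s2 s3
  have g1 := cm G s t; have g2 := cm G s w; have g3 := cm G w s; have g4 := cm G s x
  have hxs : G.dist x s = 1 := by omega
  have hts : G.dist t s = 1 := by omega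
  have hsw : G.dist s w + 1 = k := by omega
  have hadj_xs : G.Adj x s := SimpleGraph.dist_eq_one_iff_adj.mp hxs
  have hadj_ts : G.Adj t s := SimpleGraph.dist_eq_one_iff_adj.mp hts
  have hsa : s ≠ a := by
    intro h; rw [h] at hsw; omega
  have hsb : s ≠ b := by
    intro h; rw [h] at hsw; omega
  -- x and t are both medians of (a, b, s); contradiction with uniqueness
  have hdas : G.dist a s = 2 := dist_two hconn hmed hax.symm hadj_xs hsa.symm
  have hdbs : G.dist b s = 2 := dist_two hconn hmed hbx.symm hadj_xs hsb.symm
  obtain ⟨m, -, hmu⟩ := hmed a b s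
  have hmem : ∀ y : V, G.Adj a y → G.Adj b y → G.Adj y s →
      y ∈ graphInterval G a b ∧ y ∈ graphInterval G b s ∧ y ∈ graphInterval G s a := by
    intro y h1 h2 h3
    refine ⟨?_, ?_, ?_⟩ <;> simp only [graphInterval, Set.mem_setOf_eq]
    · rw [dadj h1, cm G y b, dadj h2, hdab]
    · rw [dadj h2, dadj h3, hdbs]
    · rw [cm G s y, dadj h3, cm G y a, dadj h1, cm G s a, hdas]
  have hx_med := hmu x (hmem x hax hbx hadj_xs)
  have ht_med := hmu t (hmem t hadj_at hadj_bt hadj_ts)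
  have : x = t := hx_med.trans ht_med.symm
  rw [this] at hxt
  simp [SimpleGraph.dist_self] at hxt

lemma walk_dist_le (hconn : G.Connected) {c : ℕ → V} {n : ℕ}
    (hadj : ∀ l < n, G.Adj (c l) (c (l+1))) :
    ∀ m a, a + m ≤ n → G.dist (c a) (c (a + m)) ≤ m := by
  intro m
  induction m with
  | zero => intro a _; simp [SimpleGraph.dist_self]
  | succ m ih =>
    intro a h
    have h1 := ih a (by omega)
    have h2 : G.dist (c (a + m)) (c (a + m + 1)) = 1 := dadj (hadj (a + m) (by omega))
    have h3 := hconn.dist_triangle (u := c a) (v := c (a + m)) (w := c (a + m + 1))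
    show G.dist (c a) (c (a + m + 1)) ≤ m + 1
    omega

lemma geodesic_dist (hconn : G.Connected) {c : ℕ → V} {n : ℕ}
    (hadj : ∀ l < n, G.Adj (c l) (c (l+1)))
    (hd : G.dist (c 0) (c n) = n) :
    ∀ a b, a ≤ b → b ≤ n → G.dist (c a) (c b) = b - a := by
  intro a b hab hbn
  have h1 : G.dist (c 0) (c a) ≤ a := by
    have := walk_dist_le hconn hadj a 0 (by omega); simpa using this
  have h2 : G.dist (c a) (c b) ≤ b - a := by
    have := walk_dist_le hconn hadj (b - a) a (by omega)
    rw [show a + (b - a) = b by omega] at this; exact this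
  have h3 : G.dist (c b) (c n) ≤ n - b := by
    have := walk_dist_le hconn hadj (n - b) b (by omega)
    rw [show b + (n - b) = n by omega] at this; exact this
  have t1 := hconn.dist_triangle (u := c 0) (v := c a) (w := c b)
  have t2 := hconn.dist_triangle (u := c 0) (v := c b) (w := c n)
  omega

/-- Lemma C: no geodesic starts and ends on the `u`-side of the wall of edge `uw`
while its interior lies entirely on the `w`-side. -/
lemma lemC (hconn : G.Connected) (hmed : MedG G) {u w : V} (huw : G.Adj u w) :
    ∀ N n (c : ℕ → V),
      (∀ l < n, G.Adj (c l) (c (l+1))) →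
      G.dist (c 0) (c n) = n → 2 ≤ n →
      (G.dist (c 0) u + 1 = G.dist (c 0) w) →
      (G.dist (c n) u + 1 = G.dist (c n) w) →
      (∀ l, 0 < l → l < n → G.dist (c l) w + 1 = G.dist (c l) u) →
      (∑ l ∈ Finset.range (n+1), G.dist (c l) u) ≤ N → False := by
  intro N
  induction N with
  | zero =>
    intro n c hadj hgeo hn h0 hn' hint hsum
    have h1 : G.dist (c 1) u = 0 := by
      have : ∀ l ∈ Finset.range (n+1), G.dist (c l) u = 0 :=
        Finset.sum_eq_zero_iff.mp (by omega)
      exact this 1 (by simp; omega)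
    have h0' : G.dist (c 0) u = 0 := by
      have : ∀ l ∈ Finset.range (n+1), G.dist (c l) u = 0 :=
        Finset.sum_eq_zero_iff.mp (by omega)
      exact this 0 (by simp)
    have hc0 : c 0 = u := dz hconn h0'
    have hc1 : c 1 = u := dz hconn h1
    have hi := hint 1 (by omega) (by omega)
    rw [hc0] at h0
    rw [hc1] at hi
    omega
  | succ N IH =>
    intro n c hadj hgeo hn h0 hn' hint hsum
    by_cases hn2 : n = 2
    · subst hn2
      have hab : c 0 ≠ c 2 := by
        intro h; rw [h, SimpleGraph.dist_self] at hgeo; omega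
      exact claimA hconn hmed huw (hadj 0 (by omega)) (hadj 1 (by omega)).symm hab
        h0 hn' (hint 1 (by omega) (by omega))
    have hn3 : 3 ≤ n := by omega
    -- key step: a strict interior local max at position p+1 with 1 ≤ p
    have key : ∀ (c : ℕ → V),
        (∀ l < n, G.Adj (c l) (c (l+1))) →
        G.dist (c 0) (c n) = n →
        (G.dist (c 0) u + 1 = G.dist (c 0) w) →
        (G.dist (c n) u + 1 = G.dist (c n) w) →
        (∀ l, 0 < l → l < n → G.dist (c l) w + 1 = G.dist (c l) u) →
        (∑ l ∈ Finset.range (n+1), G.dist (c l) u) ≤ N + 1 →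
        ∀ p, 1 ≤ p → p + 2 ≤ n →
        G.dist (c p) u + 1 = G.dist (c (p+1)) u →
        G.dist (c (p+2)) u + 1 = G.dist (c (p+1)) u → False := by
      intro c hadj hgeo h0 hn' hint hsum p hp1 hpn hup hdown
      have hgd := geodesic_dist hconn hadj hgeo
      have hd2 : G.dist (c p) (c (p+2)) = 2 := by
        have := hgd p (p+2) (by omega) (by omega); omega
      obtain ⟨t, ⟨t1, t2, t3⟩, -⟩ := hmed (c p) (c (p+2)) u
      simp only [graphInterval, Set.mem_setOf_eq] at t1 t2 t3
      have f1 := cm G t (c (p+2)); have f2 := cm G t u; have f3 := cm G u t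
      have f4 := cm G t (c p); have f5 := cm G u (c p)
      have hat : G.dist (c p) t = 1 := by omega
      have hbt : G.dist t (c (p+2)) = 1 := by omega
      have htu : G.dist t u + 2 = G.dist (c (p+1)) u := by omega
      have hadj_pt : G.Adj (c p) t := SimpleGraph.dist_eq_one_iff_adj.mp hat
      have hadj_tp : G.Adj t (c (p+2)) := SimpleGraph.dist_eq_one_iff_adj.mp hbt
      rcases dicho hconn hmed huw t with hWt | hWt
      · -- t on the u-side : shorten the configuration to length p+1
        set c' : ℕ → V := fun m => if m = p + 1 then t else c m with hc'
        have hc'eq : ∀ m, m ≠ p + 1 → c' m = c m := by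
          intro m hm; simp [hc', hm]
        have hc'p : c' (p+1) = t := by simp [hc']
        apply IH (p+1) c'
        · intro l hl
          by_cases hlp : l = p
          · rw [hlp, hc'eq p (by omega), hc'p]
            exact hadj_pt
          · rw [hc'eq l (by omega), hc'eq (l+1) (by omega)]
            exact hadj l (by omega)
        · rw [hc'eq 0 (by omega), hc'p]
          have hle : G.dist (c 0) t ≤ p + 1 := by
            have := hconn.dist_triangle (u := c 0) (v := c p) (w := t)
            have := hgd 0 p (by omega) (by omega)
            omega
          have hge : p + 1 ≤ G.dist (c 0) t := by
            have q1 := hconn.dist_triangle (u := c 0) (v := t) (w := c n)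
            have q2 := hconn.dist_triangle (u := t) (v := c (p+2)) (w := c n)
            have q3 := hgd (p+2) n (by omega) (by omega)
            omega
          omega
        · omega
        · rw [hc'eq 0 (by omega)]; exact h0
        · rw [hc'p]; exact hWt
        · intro l hl1 hl2
          rw [hc'eq l (by omega)]
          exact hint l hl1 (by omega)
        · -- sum bound
          show ∑ l ∈ Finset.range (p+2), G.dist (c' l) u ≤ N
          have hsub : ∑ l ∈ Finset.range (p+3), G.dist (c l) u ≤
              ∑ l ∈ Finset.range (n+1), G.dist (c l) u := by
            apply Finset.sum_le_sum_of_subset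
            exact Finset.range_subset_range.mpr (by omega)
          have hs1 : ∑ l ∈ Finset.range (p+2), G.dist (c' l) u =
              (∑ l ∈ Finset.range (p+1), G.dist (c l) u) + G.dist t u := by
            rw [Finset.sum_range_succ]
            congr 1
            · apply Finset.sum_congr rfl
              intro l hl
              rw [hc'eq l (by simp at hl; omega)]
            · rw [hc'p]
          have hs2 : ∑ l ∈ Finset.range (p+3), G.dist (c l) u =
              ((∑ l ∈ Finset.range (p+1), G.dist (c l) u) + G.dist (c (p+1)) u)
                + G.dist (c (p+2)) u := by
            rw [Finset.sum_range_succ, Finset.sum_range_succ]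
          omega
      · -- t on the w-side : replace c (p+1) by t, total sum drops by 2
        set c' : ℕ → V := fun m => if m = p + 1 then t else c m with hc'
        have hc'eq : ∀ m, m ≠ p + 1 → c' m = c m := by
          intro m hm; simp [hc', hm]
        have hc'p : c' (p+1) = t := by simp [hc']
        apply IH n c'
        · intro l hl
          by_cases hlp : l = p
          · rw [hlp, hc'eq p (by omega), hc'p]; exact hadj_pt
          by_cases hlp1 : l = p + 1
          · subst hlp1; rw [hc'p, hc'eq (p+2) (by omega)]; exact hadj_tp
          · rw [hc'eq l hlp1, hc'eq (l+1) (by omega)]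
            exact hadj l hl
        · rw [hc'eq 0 (by omega), hc'eq n (by omega)]; exact hgeo
        · omega
        · rw [hc'eq 0 (by omega)]; exact h0
        · rw [hc'eq n (by omega)]; exact hn'
        · intro l hl1 hl2
          by_cases hlp1 : l = p + 1
          · subst hlp1; rw [hc'p]; exact hWt
          · rw [hc'eq l hlp1]; exact hint l hl1 hl2
        · have hmem : p + 1 ∈ Finset.range (n+1) := by simp; omega
          have h₁ := Finset.sum_erase_add (Finset.range (n+1)) (fun l => G.dist (c l) u) hmem
          have h₂ := Finset.sum_erase_add (Finset.range (n+1)) (fun l => G.dist (c' l) u) hmem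
          have hcongr : ∑ l ∈ (Finset.range (n+1)).erase (p+1), G.dist (c' l) u =
              ∑ l ∈ (Finset.range (n+1)).erase (p+1), G.dist (c l) u := by
            apply Finset.sum_congr rfl
            intro l hl
            rw [hc'eq l (Finset.ne_of_mem_erase hl)]
          rw [hc'p] at h₂
          omega
    -- find the interior local max
    have hgd := geodesic_dist hconn hadj hgeo
    have hcross0 : G.dist (c 1) u = G.dist (c 0) u + 1 := by
      have h01 := hadj 0 (by omega)
      rw [show (0:ℕ) + 1 = 1 by norm_num] at h01
      have d1 := dicho hconn hmed h01 u
      have d2 := dicho hconn hmed h01 w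
      have e1 := cm G u (c 0); have e2 := cm G u (c 1)
      have e3 := cm G w (c 0); have e4 := cm G w (c 1)
      have hi := hint 1 (by omega) (by omega)
      omega
    have hcrossn : G.dist (c (n-1)) u = G.dist (c n) u + 1 := by
      have hh := hadj (n-1) (by omega)
      rw [show n - 1 + 1 = n by omega] at hh
      have d1 := dicho hconn hmed hh u
      have d2 := dicho hconn hmed hh w
      have e1 := cm G u (c (n-1)); have e2 := cm G u (c n)
      have e3 := cm G w (c (n-1)); have e4 := cm G w (c n)
      have hi := hint (n-1) (by omega) (by omega)
      omega
    obtain ⟨p₀, hp₀mem, hp₀max⟩ := Finset.exists_max_image (Finset.Icc 1 (n-1))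
      (fun l => G.dist (c l) u) ⟨1, by simp; omega⟩
    simp only [Finset.mem_Icc] at hp₀mem
    have hup : G.dist (c (p₀+1)) u + 1 = G.dist (c p₀) u := by
      have d1 := dicho hconn hmed (hadj p₀ (by omega)) u
      have e1 := cm G u (c p₀); have e2 := cm G u (c (p₀+1))
      by_cases hc : p₀ + 1 ≤ n - 1
      · have hm := hp₀max (p₀+1) (Finset.mem_Icc.mpr ⟨by omega, hc⟩)
        omega
      · have hpn : p₀ = n - 1 := by omega
        rw [show p₀ + 1 = n by omega]
        rw [hpn]
        omega
    have hdownmax : G.dist (c (p₀-1)) u + 1 = G.dist (c p₀) u := by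
      have hh := hadj (p₀-1) (by omega)
      rw [show p₀ - 1 + 1 = p₀ by omega] at hh
      have d1 := dicho hconn hmed hh u
      have e1 := cm G u (c p₀); have e2 := cm G u (c (p₀-1))
      by_cases hc : 1 ≤ p₀ - 1
      · have hm := hp₀max (p₀-1) (Finset.mem_Icc.mpr ⟨hc, by omega⟩)
        omega
      · have hp1 : p₀ = 1 := by omega
        rw [hp1, show (1:ℕ) - 1 = 0 by norm_num]
        omega
    by_cases hp2 : 2 ≤ p₀
    · apply key c hadj hgeo h0 hn' hint hsum (p₀ - 1) (by omega) (by omega)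
      · rw [show p₀ - 1 + 1 = p₀ by omega]
        exact hdownmax
      · rw [show p₀ - 1 + 2 = p₀ + 1 by omega, show p₀ - 1 + 1 = p₀ by omega]
        exact hup
    · -- p₀ = 1 : reverse the configuration
      have hp1 : p₀ = 1 := by omega
      subst hp1
      rw [show (1:ℕ) + 1 = 2 by norm_num] at hup
      set c' : ℕ → V := fun m => c (n - m) with hc'
      have hrc : ∀ m ≤ n, c' m = c (n - m) := fun m _ => rfl
      apply key c' ?_ ?_ ?_ ?_ ?_ ?_ (n - 2) (by omega) (by omega) ?_ ?_
      · intro l hl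
        have hh := hadj (n - (l+1)) (by omega)
        rw [show n - (l+1) + 1 = n - l by omega] at hh
        exact hh.symm
      · show G.dist (c (n - 0)) (c (n - n)) = n
        rw [Nat.sub_zero, Nat.sub_self, cm G]
        exact hgeo
      · show G.dist (c (n - 0)) u + 1 = G.dist (c (n - 0)) w
        rw [Nat.sub_zero]; exact hn'
      · show G.dist (c (n - n)) u + 1 = G.dist (c (n - n)) w
        rw [Nat.sub_self]; exact h0
      · intro l hl1 hl2
        show G.dist (c (n - l)) w + 1 = G.dist (c (n - l)) u
        exact hint (n - l) (by omega) (by omega)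
      · calc ∑ l ∈ Finset.range (n+1), G.dist (c' l) u
            = ∑ l ∈ Finset.range (n+1), G.dist (c (n + 1 - 1 - l)) u := by
              apply Finset.sum_congr rfl
              intro l hl
              simp only [Finset.mem_range] at hl
              rw [hrc l (by omega), show n + 1 - 1 - l = n - l by omega]
          _ = ∑ l ∈ Finset.range (n+1), G.dist (c l) u :=
              Finset.sum_range_reflect (fun l => G.dist (c l) u) (n+1)
          _ ≤ N + 1 := hsum
      · show G.dist (c (n - (n-2))) u + 1 = G.dist (c (n - (n-2+1))) u
        rw [show n - (n-2) = 2 by omega, show n - (n-2+1) = 1 by omega]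
        omega
      · show G.dist (c (n - (n-2+2))) u + 1 = G.dist (c (n - (n-2+1))) u
        rw [show n - (n-2+2) = 0 by omega, show n - (n-2+1) = 1 by omega]
        omega

/-- Convexity of the side `{z | d z u + 1 = d z w}` of an edge `uw`. -/
lemma Ws_convex (hconn : G.Connected) (hmed : MedG G) {u w : V} (huw : G.Adj u w)
    {x y z : V} (hx : G.dist x u + 1 = G.dist x w) (hy : G.dist y u + 1 = G.dist y w)
    (hz : G.dist x z + G.dist z y = G.dist x y) :
    G.dist z u + 1 = G.dist z w := by
  by_contra hzc
  have hzw : G.dist z w + 1 = G.dist z u := by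
    rcases dicho hconn hmed huw z with h | h
    · exact absurd h hzc
    · exact h
  obtain ⟨p1, hp1⟩ := hconn.exists_walk_length_eq_dist x z
  obtain ⟨p2, hp2⟩ := hconn.exists_walk_length_eq_dist z y
  set q := p1.append p2 with hq
  set c : ℕ → V := fun l => q.getVert l with hc
  set n := G.dist x y with hn
  have hql : q.length = n := by
    rw [hq, SimpleGraph.Walk.length_append, hp1, hp2, hn, hz]
  have hc0 : c 0 = x := q.getVert_zero
  have hcn : c n = y := by
    rw [hc, ← hql]; exact q.getVert_length
  have hadj : ∀ l < n, G.Adj (c l) (c (l+1)) := by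
    intro l hl
    exact q.adj_getVert_succ (by omega)
  have hgeo : G.dist (c 0) (c n) = n := by rw [hc0, hcn, hn]
  set l0 := G.dist x z with hl0
  have hl0n : l0 ≤ n := by omega
  have hcl0 : c l0 = z := by
    show (p1.append p2).getVert l0 = z
    rw [SimpleGraph.Walk.getVert_append, hp1]
    simp
  -- the window
  classical
  set P : ℕ → Prop := fun l => G.dist (c l) u + 1 = G.dist (c l) w with hP
  have hP0 : P 0 := by rw [hP]; simp only; rw [hc0]; exact hx
  have hPl0 : ¬ P l0 := by
    rw [hP]; simp only; rw [hcl0]; omega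
  have hPn : P n := by rw [hP]; simp only; rw [hcn]; exact hy
  set i := Nat.findGreatest P l0 with hi
  have hPi : P i := Nat.findGreatest_spec (Nat.zero_le l0) hP0
  have hil : i ≤ l0 := Nat.findGreatest_le l0
  have hilt : i < l0 := lt_of_le_of_ne hil (fun h => hPl0 (h ▸ hPi))
  have hgr : ∀ m, i < m → m ≤ l0 → ¬ P m := fun m h1 h2 =>
    Nat.findGreatest_is_greatest h1 h2
  set Q : ℕ → Prop := fun m => P (l0 + m) with hQ
  have hexQ : ∃ m, Q m := ⟨n - l0, by rw [hQ]; simp only; rw [show l0 + (n - l0) = n by omega]; exact hPn⟩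
  set j0 := Nat.find hexQ with hj0
  have hQj : Q j0 := Nat.find_spec hexQ
  have hjmin : ∀ m, m < j0 → ¬ Q m := fun m hm => Nat.find_min hexQ hm
  have hj0le : j0 ≤ n - l0 := Nat.find_min' hexQ (by
    rw [hQ]; simp only; rw [show l0 + (n - l0) = n by omega]; exact hPn)
  have hj00 : 1 ≤ j0 := by
    rcases Nat.eq_zero_or_pos j0 with h | h
    · exfalso; apply hPl0
      have := hQj; rw [h] at this
      exact this
    · exact h
  set j' := l0 + j0 with hj'
  have hj'n : j' ≤ n := by omega
  -- apply lemC to the window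
  have hgd := geodesic_dist hconn hadj hgeo
  apply lemC hconn hmed huw (∑ l ∈ Finset.range ((j' - i) + 1), G.dist (c (i + l)) u)
    (j' - i) (fun m => c (i + m))
  · intro l hl
    exact hadj (i + l) (by omega)
  · show G.dist (c (i + 0)) (c (i + (j' - i))) = j' - i
    rw [show i + 0 = i by omega, show i + (j' - i) = j' by omega]
    exact hgd i j' (by omega) hj'n
  · omega
  · show G.dist (c (i + 0)) u + 1 = G.dist (c (i + 0)) w
    rw [show i + 0 = i by omega]
    exact hPi
  · show G.dist (c (i + (j' - i))) u + 1 = G.dist (c (i + (j' - i))) w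
    rw [show i + (j' - i) = j' by omega]
    exact hQj
  · intro l h1 h2
    show G.dist (c (i + l)) w + 1 = G.dist (c (i + l)) u
    have hnP : ¬ P (i + l) := by
      by_cases hcl : i + l ≤ l0
      · exact hgr (i + l) (by omega) hcl
      · have := hjmin (i + l - l0) (by omega)
        rw [hQ] at this; simp only at this
        rw [show l0 + (i + l - l0) = i + l by omega] at this
        exact this
    rcases dicho hconn hmed huw (c (i + l)) with h | h
    · exact absurd h hnP
    · exact h
  · exact le_refl _

lemma hs_mem (hconn : G.Connected) (hmed : MedG G) {u w : V} (huw : G.Adj u w) (z : V) :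
    z ∈ {z : V | G.dist z u < G.dist z w} ↔ G.dist z u + 1 = G.dist z w := by
  simp only [Set.mem_setOf_eq]
  rcases dicho hconn hmed huw z with h | h <;> constructor <;> intro h' <;> omega

lemma hs_mem_c (hconn : G.Connected) (hmed : MedG G) {u w : V} (huw : G.Adj u w) (z : V) :
    z ∈ {z : V | G.dist z u < G.dist z w}ᶜ ↔ G.dist z w + 1 = G.dist z u := by
  simp only [Set.mem_compl_iff, Set.mem_setOf_eq]
  rcases dicho hconn hmed huw z with h | h <;> constructor <;> intro h' <;> omega

/-- The side of an edge is a halfspace. -/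
lemma half (hconn : G.Connected) (hmed : MedG G) {u w : V} (huw : G.Adj u w) :
    graphHalfspace G {z : V | G.dist z u < G.dist z w} := by
  constructor
  · intro a ha b hb zz hzz
    simp only [graphInterval, Set.mem_setOf_eq] at hzz
    rw [hs_mem hconn hmed huw] at ha hb ⊢
    exact Ws_convex hconn hmed huw ha hb hzz
  · intro a ha b hb zz hzz
    simp only [graphInterval, Set.mem_setOf_eq] at hzz
    rw [hs_mem_c hconn hmed huw] at ha hb ⊢
    exact Ws_convex hconn hmed huw.symm ha hb hzz

/-- Any halfspace crossing the edge `uw` is the canonical one. -/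
lemma uniq_half (hconn : G.Connected) (hmed : MedG G) {u w : V} (huw : G.Adj u w)
    {H : Set V} (hH : graphHalfspace G H) (hu : u ∈ H) (hw : w ∉ H) :
    H = {z : V | G.dist z u < G.dist z w} := by
  have hd : G.dist w u = 1 := dadj huw.symm
  have hd' : G.dist u w = 1 := dadj huw
  ext z
  simp only [Set.mem_setOf_eq]
  constructor
  · intro hz
    rcases dicho hconn hmed huw z with h | h
    · omega
    · exfalso
      apply hw
      apply hH.1 z hz u hu
      show G.dist z w + G.dist w u = G.dist z u
      omega
  · intro hz
    by_contra hzH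
    have h : G.dist z u + 1 = G.dist z w := by
      rcases dicho hconn hmed huw z with h | h <;> omega
    have : u ∈ Hᶜ := by
      apply hH.2 z hzH w hw
      show G.dist z u + G.dist u w = G.dist z w
      omega
    exact this hu

end

/-- In a median graph, the path metric coincides with the wall metric:
the distance between two vertices equals the number of walls separating them,
i.e. the number of halfspaces containing the first but not the second. -/
theorem stmt19 {V : Type*} (G : SimpleGraph V) (hconn : G.Connected)
    (hmed : ∀ x y z : V, ∃! m : V,
      m ∈ graphInterval G x y ∧ m ∈ graphInterval G y z ∧ m ∈ graphInterval G z x)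
    (u v : V) :
    G.dist u v = Nat.card {H : Set V // graphHalfspace G H ∧ u ∈ H ∧ v ∉ H} := by
  have main : ∀ (n : ℕ) (a b : V), G.dist a b = n →
      ({H : Set V | graphHalfspace G H ∧ a ∈ H ∧ b ∉ H}).Finite ∧
      ({H : Set V | graphHalfspace G H ∧ a ∈ H ∧ b ∉ H}).ncard = n := by
    intro n
    induction n with
    | zero =>
      intro a b h
      have hab : a = b := dz hconn h
      subst hab
      have he : {H : Set V | graphHalfspace G H ∧ a ∈ H ∧ a ∉ H} = ∅ := by
        ext H; simp only [Set.mem_setOf_eq, Set.mem_empty_iff_false, iff_false]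
        rintro ⟨-, h1, h2⟩; exact h2 h1
      rw [he]
      exact ⟨Set.finite_empty, Set.ncard_empty _⟩
    | succ n IH =>
      intro a b h
      obtain ⟨p, hp⟩ := hconn.exists_walk_length_eq_dist a b
      have hplen : p.length = n + 1 := by rw [hp, h]
      set wv := p.getVert 1 with hwv
      have hadj : G.Adj a wv := by
        have := p.adj_getVert_succ (i := 0) (by omega)
        rw [p.getVert_zero, show (0:ℕ) + 1 = 1 by norm_num] at this
        exact this
      have hadjall : ∀ l < n + 1, G.Adj (p.getVert l) (p.getVert (l+1)) := by
        intro l hl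
        exact p.adj_getVert_succ (by omega)
      have hgeo : G.dist (p.getVert 0) (p.getVert (n+1)) = n + 1 := by
        rw [p.getVert_zero, ← hplen, p.getVert_length, h, hplen]
      have hend : p.getVert (n+1) = b := by rw [← hplen, p.getVert_length]
      have hdw : G.dist wv b = n := by
        have := geodesic_dist hconn hadjall hgeo 1 (n+1) (by omega) (by omega)
        rw [hend] at this
        rw [hwv, this]
        omega
      have hduw : G.dist a wv = 1 := dadj hadj
      obtain ⟨hfin, hcard⟩ := IH wv b hdw
      set W0 : Set V := {z : V | G.dist z a < G.dist z wv} with hW0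
      have hset : {H : Set V | graphHalfspace G H ∧ a ∈ H ∧ b ∉ H} =
          insert W0 {H : Set V | graphHalfspace G H ∧ wv ∈ H ∧ b ∉ H} := by
        ext H
        simp only [Set.mem_setOf_eq, Set.mem_insert_iff]
        constructor
        · rintro ⟨hH, hu, hv⟩
          by_cases hw : wv ∈ H
          · right; exact ⟨hH, hw, hv⟩
          · left; exact uniq_half hconn hmed hadj hH hu hw
        · rintro (rfl | ⟨hH, hw, hv⟩)
          · refine ⟨half hconn hmed hadj, ?_, ?_⟩
            · show G.dist a a < G.dist a wv
              rw [SimpleGraph.dist_self, hduw]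
              omega
            · show ¬ G.dist b a < G.dist b wv
              have e1 := cm G b a
              have e2 := cm G b wv
              omega
          · refine ⟨hH, ?_, hv⟩
            by_contra hu
            have hmem : wv ∈ graphInterval G a b := by
              show G.dist a wv + G.dist wv b = G.dist a b
              omega
            exact (hH.2 a hu b hv hmem) hw
      have hW0mem : W0 ∉ {H : Set V | graphHalfspace G H ∧ wv ∈ H ∧ b ∉ H} := by
        intro hmem
        have : wv ∈ W0 := hmem.2.1
        simp only [hW0, Set.mem_setOf_eq, SimpleGraph.dist_self] at this
        omega
      constructor
      · rw [hset]
        exact (hfin.insert _)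
      · rw [hset, Set.ncard_insert_of_notMem hW0mem hfin, hcard]
  obtain ⟨-, hcard⟩ := main (G.dist u v) u v rfl
  calc G.dist u v = ({H : Set V | graphHalfspace G H ∧ u ∈ H ∧ v ∉ H}).ncard := hcard.symm
    _ = Nat.card {H : Set V // graphHalfspace G H ∧ u ∈ H ∧ v ∉ H} :=
        (Nat.card_coe_set_eq _).symm
end
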